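/- arXiv:1505.01993 — 12 statements merged into one kernel-verified Lean document; each statement's English description precedes it below -/
import Mathlib

section
/- For every integer q ≥ 2 and all integers n, s with 1 ≤ s ≤ n−1, the polynomial identity M_{n,s}(x,y) − (q+1)·M_{n,s+1}(x,y) + q·M_{n,s+2}(x,y) = (q−1)·C(n,s)·(x−y)^{n−s}·y^{s} holds in ℚ[x,y]. -/
/-- The MDS weight enumerator `M_{n,s}(x,y)` over a field with `q` elements,
evaluated at rationals `x, y`. -/
noncomputable def Mds (q n s : ℕ) (x y : ℚ) : ℚ :=
  x ^ n + ∑ w ∈ Finset.Icc s n, (n.choose w : ℚ) *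
    (∑ i ∈ Finset.range (w - s + 1),
      (-1 : ℚ) ^ i * (w.choose i : ℚ) * ((q : ℚ) ^ (w + 1 - s - i) - 1)) *
    x ^ (n - w) * y ^ w

noncomputable def Aq (q w d : ℕ) : ℚ :=
  ∑ i ∈ Finset.range (d + 1), (-1 : ℚ) ^ i * (w.choose i : ℚ) * ((q : ℚ) ^ (d + 1 - i) - 1)

lemma keyAq (q w d : ℕ) :
    Aq q w (d + 1) - (q : ℚ) * Aq q w d =
      ((q : ℚ) - 1) * ((-1) ^ (d + 1) * (w.choose (d + 1) : ℚ)
        + ∑ i ∈ Finset.range (d + 1), (-1 : ℚ) ^ i * (w.choose i : ℚ)) := by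
  unfold Aq
  rw [Finset.sum_range_succ]
  have h1 : d + 1 + 1 - (d + 1) = 1 := by omega
  rw [h1, pow_one]
  rw [Finset.mul_sum]
  rw [show ∀ a b c : ℚ, a + b - c = (a - c) + b from fun a b c => by ring]
  rw [← Finset.sum_sub_distrib]
  have h2 : ∀ i ∈ Finset.range (d + 1),
      (-1 : ℚ) ^ i * (w.choose i : ℚ) * ((q : ℚ) ^ (d + 1 + 1 - i) - 1)
        - (q : ℚ) * ((-1 : ℚ) ^ i * (w.choose i : ℚ) * ((q : ℚ) ^ (d + 1 - i) - 1))
      = ((q : ℚ) - 1) * ((-1 : ℚ) ^ i * (w.choose i : ℚ)) := by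
    intro i hi
    rw [Finset.mem_range] at hi
    have : d + 1 + 1 - i = (d + 1 - i) + 1 := by omega
    rw [this, pow_succ]
    ring
  rw [Finset.sum_congr rfl h2, ← Finset.mul_sum]
  ring

lemma scalarAq (q w s k : ℕ) (hw : w = s + (k + 2)) :
    Aq q w (k + 2) - ((q : ℚ) + 1) * Aq q w (k + 1) + (q : ℚ) * Aq q w k
      = ((q : ℚ) - 1) * (-1) ^ (k + 2) * (w.choose s : ℚ) := by
  have h1 := keyAq q w (k + 1)
  have h2 := keyAq q w k
  have hcs : w.choose (k + 2) = w.choose s := by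
    have : k + 2 = w - s := by omega
    rw [this, Nat.choose_symm (by omega)]
  have : Aq q w (k + 2) - ((q : ℚ) + 1) * Aq q w (k + 1) + (q : ℚ) * Aq q w k
      = (Aq q w (k + 2) - (q:ℚ) * Aq q w (k + 1)) - (Aq q w (k + 1) - (q:ℚ) * Aq q w k) := by ring
  rw [this, h1, h2, Finset.sum_range_succ, hcs]
  ring

lemma peel1 (f : ℕ → ℚ) (s n : ℕ) (h : s ≤ n) :
    ∑ w ∈ Finset.Icc s n, f w = f s + ∑ w ∈ Finset.Icc (s + 1) n, f w := by
  rw [show Finset.Icc s n = insert s (Finset.Icc (s + 1) n) from by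
    ext w; simp only [Finset.mem_Icc, Finset.mem_insert]; omega]
  rw [Finset.sum_insert (by simp only [Finset.mem_Icc]; omega)]

/-- For every integer `q ≥ 2` and integers `n, s` with `1 ≤ s ≤ n − 1`, the identity
`M_{n,s}(x,y) − (q+1)·M_{n,s+1}(x,y) + q·M_{n,s+2}(x,y)
  = (q−1)·C(n,s)·(x−y)^{n−s}·y^{s}` holds in `ℚ[x,y]`. -/
theorem mds_second_difference (q n s : ℕ) (hq : 2 ≤ q) (hs : 1 ≤ s) (hsn : s + 1 ≤ n) :
    ∀ x y : ℚ,
      Mds q n s x y - ((q : ℚ) + 1) * Mds q n (s + 1) x y + (q : ℚ) * Mds q n (s + 2) x y =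
        ((q : ℚ) - 1) * (n.choose s : ℚ) * (x - y) ^ (n - s) * y ^ s := by
  intro x y
  have hMds : ∀ t : ℕ, Mds q n t x y = x ^ n + ∑ w ∈ Finset.Icc t n,
      (n.choose w : ℚ) * Aq q w (w - t) * x ^ (n - w) * y ^ w := by
    intro t
    unfold Mds Aq
    congr 1
    apply Finset.sum_congr rfl
    intro w hw
    rw [Finset.mem_Icc] at hw
    congr 2
    congr 1
    apply Finset.sum_congr rfl
    intro i hi
    rw [Finset.mem_range] at hi
    have he : w + 1 - t - i = w - t + 1 - i := by omega
    rw [he]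
  have hexp : (x - y) ^ (n - s) * y ^ s = ∑ w ∈ Finset.Icc s n,
      (((n - s).choose (w - s) : ℚ) * (-1) ^ (w - s) * x ^ (n - w) * y ^ w) := by
    rw [sub_pow, Finset.sum_mul]
    apply Finset.sum_nbij' (fun m => n - m) (fun w => n - w)
    · intro m hm
      rw [Finset.mem_range] at hm
      rw [Finset.mem_Icc]
      omega
    · intro w hw
      rw [Finset.mem_Icc] at hw
      rw [Finset.mem_range]
      omega
    · intro m hm
      rw [Finset.mem_range] at hm
      omega
    · intro w hw
      rw [Finset.mem_Icc] at hw
      omega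
    · intro m hm
      rw [Finset.mem_range] at hm
      have h1 : n - (n - m) = m := by omega
      have h2 : (n - m) - s = n - s - m := by omega
      have h3 : m + (n - s) = (n - s - m) + 2 * m := by omega
      rw [h1, h2, h3, pow_add, pow_mul]
      have h4 : y ^ (n - m) = y ^ (n - s - m) * y ^ s := by
        rw [← pow_add]; congr 1; omega
      rw [h4, ← Nat.choose_symm (show m ≤ n - s by omega)]
      norm_num
      ring
  have hRHS : ((q : ℚ) - 1) * (n.choose s : ℚ) * (x - y) ^ (n - s) * y ^ s
      = ∑ w ∈ Finset.Icc s n, ((q : ℚ) - 1) * (n.choose s : ℚ) *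
          ((n - s).choose (w - s) : ℚ) * (-1) ^ (w - s) * x ^ (n - w) * y ^ w := by
    rw [mul_assoc, hexp, Finset.mul_sum]
    apply Finset.sum_congr rfl
    intro w hw
    ring
  have hB0 : (n.choose s : ℚ) * Aq q s (s - s) * x ^ (n - s) * y ^ s
      = ((q : ℚ) - 1) * (n.choose s : ℚ) * ((n - s).choose (s - s) : ℚ) * (-1) ^ (s - s)
          * x ^ (n - s) * y ^ s := by
    have hA0 : Aq q s 0 = (q : ℚ) - 1 := by simp [Aq]
    rw [Nat.sub_self, hA0, Nat.choose_zero_right, pow_zero]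
    push_cast
    ring
  have hB1 : (n.choose (s + 1) : ℚ) * Aq q (s + 1) (s + 1 - s) * x ^ (n - (s + 1)) * y ^ (s + 1)
      - ((q : ℚ) + 1) * ((n.choose (s + 1) : ℚ) * Aq q (s + 1) (s + 1 - (s + 1))
          * x ^ (n - (s + 1)) * y ^ (s + 1))
      = ((q : ℚ) - 1) * (n.choose s : ℚ) * ((n - s).choose (s + 1 - s) : ℚ)
          * (-1) ^ (s + 1 - s) * x ^ (n - (s + 1)) * y ^ (s + 1) := by
    have h1 : s + 1 - s = 1 := by omega
    have h0 : s + 1 - (s + 1) = 0 := by omega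
    rw [h1, h0]
    have hA1 : Aq q (s + 1) 1 = ((q : ℚ) ^ 2 - 1) - ((s : ℚ) + 1) * ((q : ℚ) - 1) := by
      simp [Aq, Finset.sum_range_succ, Nat.choose_one_right]
      push_cast
      ring
    have hA0 : Aq q (s + 1) 0 = (q : ℚ) - 1 := by
      simp [Aq]
    have hc : (n.choose (s + 1) : ℚ) * ((s : ℚ) + 1) = (n.choose s : ℚ) * ((n : ℚ) - (s : ℚ)) := by
      have h := congrArg (Nat.cast : ℕ → ℚ) (Nat.choose_succ_right_eq n s)
      push_cast [Nat.cast_sub (show s ≤ n by omega)] at h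
      linarith
    have hch1 : ((n - s).choose 1 : ℚ) = (n : ℚ) - (s : ℚ) := by
      rw [Nat.choose_one_right, Nat.cast_sub (show s ≤ n by omega)]
    rw [hA1, hA0, hch1]
    linear_combination (-((q : ℚ) - 1) * (x ^ (n - (s + 1)) * y ^ (s + 1))) * hc
  have hsum : (∑ w ∈ Finset.Icc (s + 2) n, (n.choose w : ℚ) * Aq q w (w - s) * x ^ (n - w) * y ^ w)
      - ((q : ℚ) + 1) * (∑ w ∈ Finset.Icc (s + 2) n,
          (n.choose w : ℚ) * Aq q w (w - (s + 1)) * x ^ (n - w) * y ^ w)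
      + (q : ℚ) * (∑ w ∈ Finset.Icc (s + 2) n,
          (n.choose w : ℚ) * Aq q w (w - (s + 2)) * x ^ (n - w) * y ^ w)
      = ∑ w ∈ Finset.Icc (s + 2) n, ((q : ℚ) - 1) * (n.choose s : ℚ) *
          ((n - s).choose (w - s) : ℚ) * (-1) ^ (w - s) * x ^ (n - w) * y ^ w := by
    rw [Finset.mul_sum, Finset.mul_sum]
    rw [← Finset.sum_sub_distrib, ← Finset.sum_add_distrib]
    apply Finset.sum_congr rfl
    intro w hw
    rw [Finset.mem_Icc] at hw
    obtain ⟨k, hk⟩ : ∃ k, w = s + (k + 2) := ⟨w - s - 2, by omega⟩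
    have h1 : w - s = k + 2 := by omega
    have h2 : w - (s + 1) = k + 1 := by omega
    have h3 : w - (s + 2) = k := by omega
    have hsc := scalarAq q w s k hk
    have hch : (n.choose w : ℚ) * (w.choose s : ℚ)
        = (n.choose s : ℚ) * ((n - s).choose (w - s) : ℚ) := by
      rw [← Nat.cast_mul, ← Nat.cast_mul, Nat.choose_mul (n := n) (k := w) (s := s) (by omega)]
    rw [h1] at hch
    rw [h1, h2, h3]
    linear_combination ((n.choose w : ℚ) * (x ^ (n - w) * y ^ w)) * hsc
      + (((q : ℚ) - 1) * (-1 : ℚ) ^ (k + 2) * (x ^ (n - w) * y ^ w)) * hch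
  rw [hMds s, hMds (s + 1), hMds (s + 2), hRHS]
  rw [peel1 _ s n (by omega), peel1 _ (s + 1) n (by omega), peel1 _ (s + 1) n (by omega),
      peel1 _ s n (by omega), peel1 _ (s + 1) n (by omega)]
  beta_reduce
  linear_combination hB0 + hB1 + hsum
end

section
/- Let C ⊆ F_q^n be a linear code of dimension k, minimum distance d and genus g = n+1−k−d ≥ 1, whose dual code has minimum distance d⊥ and genus g⊥ = k+1−d⊥ ≥ 1, and set r = g + g⊥. Suppose c_0, …, c_{r−2} ∈ ℚ satisfy W_C(x,y) = M_{n,n+1−k}(x,y) + (q−1)·Σ_{i=0}^{r−2} c_i·C(n,d+i)·(x−y)^{n−d−i}·y^{d+i}. Then for d ≤ w ≤ d+g−1 one has W_C^{(w)} = (q−1)·C(n,w)·Σ_{i=0}^{w−d} (−1)^{w−d−i}·C(w,d+i)·c_i, and for d+g ≤ w ≤ n one has W_C^{(w)} = (q−1)·C(n,w)·Σ_{i=0}^{min(w−d, n−d−d⊥)} (−1)^{w−d−i}·C(w,d+i)·c_i + C(n,w)·Σ_{j=0}^{w−n−1+k} (−1)^{j}·C(w,j)·(q^{w−n+k−j}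 − 1). -/
/-- The number `W_C^{(w)}` of codewords of the linear code `C` of Hamming weight `w`. -/
noncomputable def wtCount {F : Type*} [Field F] [Fintype F] [DecidableEq F] {n : ℕ}
    (C : Submodule F (Fin n → F)) (w : ℕ) : ℕ :=
  Nat.card {c : Fin n → F // c ∈ C ∧ hammingNorm c = w}

/-- The homogeneous weight enumerator `W_C(x,y) = x^n + Σ_{w=d}^n W_C^{(w)} x^{n-w} y^w`
of a code `C` of minimum distance `d`, evaluated at rationals `x, y`. -/
noncomputable def wEnum {F : Type*} [Field F] [Fintype F] [DecidableEq F] {n : ℕ}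
    (C : Submodule F (Fin n → F)) (d : ℕ) (x y : ℚ) : ℚ :=
  x ^ n + ∑ w ∈ Finset.Icc d n, (wtCount C w : ℚ) * x ^ (n - w) * y ^ w

section Aux

open Polynomial Finset

lemma coeff_one_sub_X_pow (m j : ℕ) :
    ((1 - X : ℚ[X]) ^ m).coeff j = (-1 : ℚ) ^ j * m.choose j := by
  have h : (1 - X : ℚ[X]) ^ m = C ((-1 : ℚ) ^ m) * (X + C (-1)) ^ m := by
    rw [map_pow, ← mul_pow]; congr 1; simp; ring
  rw [h, coeff_C_mul, coeff_X_add_C_pow]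
  rcases le_or_gt j m with hj | hj
  · rw [← mul_assoc, ← pow_add, show m + (m - j) = 2 * (m - j) + j by omega, pow_add, pow_mul]
    norm_num
  · simp [Nat.choose_eq_zero_of_lt hj]

lemma coeff_eq (n d s r : ℕ) (a m cc : ℕ → ℚ) (e : ℚ) (hd : 1 ≤ d)
    (H : (1 + ∑ w ∈ Icc d n, C (a w) * X ^ w : ℚ[X]) =
      (1 + ∑ w ∈ Icc s n, C (m w) * X ^ w) +
        C e * ∑ i ∈ range r, C (cc i) * (1 - X) ^ (n - d - i) * X ^ (d + i))
    (w : ℕ) (hw1 : d ≤ w) (hw2 : w ≤ n) :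
    a w = (if s ≤ w then m w else 0) +
      e * ∑ i ∈ range r, cc i *
        (if d + i ≤ w then
          (-1 : ℚ) ^ (w - d - i) * ((n - d - i).choose (w - d - i) : ℚ) else 0) := by
  have h := congrArg (fun p => Polynomial.coeff p w) H
  simp only [coeff_add, coeff_one, finset_sum_coeff, coeff_C_mul, coeff_X_pow,
    coeff_mul_X_pow', coeff_one_sub_X_pow, mul_ite, mul_one, mul_zero,
    Finset.sum_ite_eq, Finset.mem_Icc, Nat.sub_sub] at h
  simp only [coeff_C] at h
  have e1 : ∀ (f : ℕ → ℚ) (lo : ℕ),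
      (∑ x ∈ Icc lo n, if x ≤ w then (if w - x = 0 then f x else 0) else 0) =
        if lo ≤ w then f w else 0 := by
    intro f lo
    have step : ∀ x, (if x ≤ w then (if w - x = 0 then f x else 0) else 0) =
        if w = x then f x else 0 := by
      intro x; split_ifs <;> first | rfl | omega
    rw [Finset.sum_congr rfl fun x _ => step x, Finset.sum_ite_eq]
    simp [Finset.mem_Icc, hw2]
  rw [e1, e1, if_pos hw1, if_neg (by omega : ¬ w = 0), zero_add, zero_add] at h
  simp only [mul_ite, mul_zero, Nat.sub_sub]
  exact h

/-- The coefficient of `y^w` in `M_{n,s}(1,y)`. -/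
noncomputable def mdsCoeff (q n s w : ℕ) : ℚ :=
  (n.choose w : ℚ) * ∑ i ∈ Finset.range (w - s + 1),
    (-1 : ℚ) ^ i * (w.choose i : ℚ) * ((q : ℚ) ^ (w + 1 - s - i) - 1)

lemma mds_one (q n s : ℕ) (y : ℚ) :
    Mds q n s 1 y = 1 + ∑ w ∈ Finset.Icc s n, mdsCoeff q n s w * y ^ w := by
  simp [Mds, mdsCoeff]

end Aux

/-- The weight distribution of a linear code `C ⊆ F_q^n` of dimension `k`, minimum
distance `d` and genus `g = n+1−k−d ≥ 1`, whose dual has minimum distance `d⊥` and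
genus `g⊥ = k+1−d⊥ ≥ 1`, is determined by the coefficients `c_0, …, c_{g+g⊥−2}` of
Duursma's reduced polynomial via the displayed formulas. -/
theorem weights_of_duursma_reduced {F : Type*} [Field F] [Fintype F] [DecidableEq F]
    {n k d dperp g gperp q : ℕ}
    (C Cd : Submodule F (Fin n → F))
    (hq : q = Fintype.card F)
    (hk : Module.finrank F C = k)
    (hd1 : ∀ c ∈ C, c ≠ 0 → d ≤ hammingNorm c)
    (hd2 : ∃ c ∈ C, c ≠ 0 ∧ hammingNorm c = d)
    (hCd : ∀ y : Fin n → F, y ∈ Cd ↔ ∀ x ∈ C, ∑ i, x i * y i = 0)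
    (hdp1 : ∀ c ∈ Cd, c ≠ 0 → dperp ≤ hammingNorm c)
    (hdp2 : ∃ c ∈ Cd, c ≠ 0 ∧ hammingNorm c = dperp)
    (hg : 1 ≤ g) (hgdef : n + 1 = k + d + g)
    (hgp : 1 ≤ gperp) (hgpdef : k + 1 = dperp + gperp)
    (c : ℕ → ℚ)
    (hW : ∀ x y : ℚ, wEnum C d x y =
      Mds q n (n + 1 - k) x y +
        ((q : ℚ) - 1) * ∑ i ∈ Finset.range (g + gperp - 1),
          c i * ((n.choose (d + i) : ℚ)) * (x - y) ^ (n - d - i) * y ^ (d + i)) :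
    (∀ w, d ≤ w → w ≤ d + g - 1 →
      (wtCount C w : ℚ) = ((q : ℚ) - 1) * (n.choose w : ℚ) *
        ∑ i ∈ Finset.range (w - d + 1),
          (-1 : ℚ) ^ (w - d - i) * (w.choose (d + i) : ℚ) * c i) ∧
    (∀ w, d + g ≤ w → w ≤ n →
      (wtCount C w : ℚ) = ((q : ℚ) - 1) * (n.choose w : ℚ) *
        (∑ i ∈ Finset.range (min (w - d) (n - d - dperp) + 1),
          (-1 : ℚ) ^ (w - d - i) * (w.choose (d + i) : ℚ) * c i) +
        (n.choose w : ℚ) * ∑ j ∈ Finset.range (w + k - n),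
          (-1 : ℚ) ^ j * (w.choose j : ℚ) * ((q : ℚ) ^ (w + k - n - j) - 1)) := by
  classical
  -- d ≥ 1
  have hd0 : 1 ≤ d := by
    obtain ⟨c0, _, hc0, hcn⟩ := hd2
    rcases Nat.eq_zero_or_pos (hammingNorm c0) with h | h
    · exact absurd (hammingNorm_eq_zero.mp h) hc0
    · omega
  -- the polynomial identity
  have H : (1 + ∑ w ∈ Finset.Icc d n,
        Polynomial.C ((wtCount C w : ℚ)) * Polynomial.X ^ w : Polynomial ℚ) =
      (1 + ∑ w ∈ Finset.Icc (n + 1 - k) n,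
        Polynomial.C (mdsCoeff q n (n + 1 - k) w) * Polynomial.X ^ w) +
        Polynomial.C ((q : ℚ) - 1) * ∑ i ∈ Finset.range (g + gperp - 1),
          Polynomial.C (c i * (n.choose (d + i) : ℚ)) *
            (1 - Polynomial.X) ^ (n - d - i) * Polynomial.X ^ (d + i) := by
    apply Polynomial.funext
    intro y
    have h := hW 1 y
    rw [mds_one] at h
    simp only [wEnum, one_pow, mul_one] at h
    simp only [Polynomial.eval_add, Polynomial.eval_one, Polynomial.eval_finset_sum,
      Polynomial.eval_mul, Polynomial.eval_pow, Polynomial.eval_C, Polynomial.eval_X,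
      Polynomial.eval_sub]
    exact h
  have key : ∀ w, d ≤ w → w ≤ n → (wtCount C w : ℚ) =
      (if n + 1 - k ≤ w then mdsCoeff q n (n + 1 - k) w else 0) +
        ((q : ℚ) - 1) * ∑ i ∈ Finset.range (g + gperp - 1),
          (c i * (n.choose (d + i) : ℚ)) *
            (if d + i ≤ w then
              (-1 : ℚ) ^ (w - d - i) * ((n - d - i).choose (w - d - i) : ℚ) else 0) :=
    fun w hw1 hw2 => coeff_eq n d (n + 1 - k) (g + gperp - 1)
      (fun w => (wtCount C w : ℚ)) (mdsCoeff q n (n + 1 - k))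
      (fun i => c i * (n.choose (d + i) : ℚ)) ((q : ℚ) - 1) hd0 H w hw1 hw2
  -- termwise transformation of the Duursma sum
  have term : ∀ w, w ≤ n → ∀ i, d + i ≤ w →
      (c i * (n.choose (d + i) : ℚ)) *
          ((-1 : ℚ) ^ (w - d - i) * ((n - d - i).choose (w - d - i) : ℚ)) =
        (n.choose w : ℚ) * ((-1 : ℚ) ^ (w - d - i) * (w.choose (d + i) : ℚ) * c i) := by
    intro w hwn i hi
    have hch := Nat.choose_mul (n := n) hi
    rw [Nat.sub_sub, Nat.sub_sub]
    have hch' : (n.choose w : ℚ) * (w.choose (d + i) : ℚ) =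
        (n.choose (d + i) : ℚ) * ((n - (d + i)).choose (w - (d + i)) : ℚ) := by
      exact_mod_cast congrArg (Nat.cast : ℕ → ℚ) hch
    linear_combination (-((-1 : ℚ) ^ (w - (d + i)) * c i)) * hch'
  -- general sum transformation
  have hsum : ∀ w, w ≤ n → ∀ b, b + 1 ≤ g + gperp - 1 → (∀ i, i < g + gperp - 1 → ¬ i < b + 1 → ¬ d + i ≤ w) →
      (∀ i, i < b + 1 → d + i ≤ w) →
      (∑ i ∈ Finset.range (g + gperp - 1), (c i * (n.choose (d + i) : ℚ)) *
          (if d + i ≤ w then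
            (-1 : ℚ) ^ (w - d - i) * ((n - d - i).choose (w - d - i) : ℚ) else 0)) =
        (n.choose w : ℚ) * ∑ i ∈ Finset.range (b + 1),
          (-1 : ℚ) ^ (w - d - i) * (w.choose (d + i) : ℚ) * c i := by
    intro w hwn b hb hzero hin
    rw [Finset.mul_sum,
      ← Finset.sum_subset (Finset.range_subset_range.mpr hb)
        (fun x hx hx2 => by
          simp only [Finset.mem_range] at hx hx2
          rw [if_neg (hzero x hx hx2), mul_zero])]
    refine Finset.sum_congr rfl fun i hi => ?_
    simp only [Finset.mem_range] at hi
    rw [if_pos (hin i hi)]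
    exact term w hwn i (hin i hi)
  constructor
  · -- low range
    intro w hw1 hw2
    have hwn : w ≤ n := by omega
    rw [key w hw1 hwn, if_neg (by omega : ¬ n + 1 - k ≤ w), zero_add,
      hsum w hwn (w - d) (by omega) (fun i _ h2 => by omega) (fun i h => by omega)]
    ring
  · -- high range
    intro w hw1 hw2
    have hnd : n - d - dperp = g + gperp - 2 := by omega
    have hm : mdsCoeff q n (n + 1 - k) w =
        (n.choose w : ℚ) * ∑ j ∈ Finset.range (w + k - n),
          (-1 : ℚ) ^ j * (w.choose j : ℚ) * ((q : ℚ) ^ (w + k - n - j) - 1) := by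
      unfold mdsCoeff
      congr 1
      rw [show w - (n + 1 - k) + 1 = w + k - n by omega]
      refine Finset.sum_congr rfl fun j hj => ?_
      simp only [Finset.mem_range] at hj
      rw [show w + 1 - (n + 1 - k) - j = w + k - n - j by omega]
    rw [key w (by omega) hw2, if_pos (by omega), hm,
      hsum w hw2 (min (w - d) (n - d - dperp)) (by omega)
        (fun i h1 h2 => by omega) (fun i h => by omega)]
    ring
end

section
/- Let C ⊆ F_q^n be a linear code of dimension k, minimum distance d and genus g = n+1−k−d ≥ 1, whose dual code has minimum distance d⊥ and genus g⊥ = k+1−d⊥ ≥ 1, and set r = g + g⊥. Suppose c_0, …, c_{r−2} ∈ ℚ satisfy W_C(x,y) = M_{n,n+1−k}(x,y) + (q−1)·Σ_{i=0}^{r−2} c_i·C(n,d+i)·(x−y)^{n−d−i}·y^{d+i}. Then for 0 ≤ i ≤ g−1 one has c_i = (q−1)^{−1}·C(n,d+i)^{−1}·Σ_{w=d}^{d+i} C(n−w, n−d−i)·W_C^{(w)}, and for g ≤ i ≤ r−2 one has c_i = (q−1)^{−1}·C(n,d+i)^{−1}·( Σ_{w=d}^{d+g−1} C(n−w, n−d−i)·W_C^{(w)}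 + Σ_{w=d+g}^{d+i} C(n−w, n−d−i)·[ W_C^{(w)} − C(n,w)·Σ_{j=0}^{w−n−1+k} (−1)^{j}·C(w,j)·(q^{w−n+k−j} − 1) ] ). In particular, (q−1)·C(n,d+i)·c_i is an integer for every 0 ≤ i ≤ r−2. -/
/-- auxiliary: the MDS weight coefficient. -/
noncomputable def innerA (q k n w : ℕ) : ℚ :=
  (n.choose w : ℚ) * ∑ j ∈ Finset.range (w + k - n),
    (-1 : ℚ) ^ j * (w.choose j : ℚ) * ((q : ℚ) ^ (w + k - n - j) - 1)

/-- The coefficients `c_i` of Duursma's reduced polynomial of a linear code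
`C ⊆ F_q^n` of dimension `k`, minimum distance `d` and genus `g = n+1−k−d ≥ 1`,
whose dual has minimum distance `d⊥` and genus `g⊥ = k+1−d⊥ ≥ 1`, are determined by
the weight distribution via the displayed formulas; in particular
`(q−1)·C(n,d+i)·c_i` is an integer for every `0 ≤ i ≤ g+g⊥−2`. -/
theorem duursma_reduced_of_weights {F : Type*} [Field F] [Fintype F] [DecidableEq F]
    {n k d dperp g gperp q : ℕ}
    (C Cd : Submodule F (Fin n → F))
    (hq : q = Fintype.card F)
    (hk : Module.finrank F C = k)
    (hd1 : ∀ c ∈ C, c ≠ 0 → d ≤ hammingNorm c)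
    (hd2 : ∃ c ∈ C, c ≠ 0 ∧ hammingNorm c = d)
    (hCd : ∀ y : Fin n → F, y ∈ Cd ↔ ∀ x ∈ C, ∑ i, x i * y i = 0)
    (hdp1 : ∀ c ∈ Cd, c ≠ 0 → dperp ≤ hammingNorm c)
    (hdp2 : ∃ c ∈ Cd, c ≠ 0 ∧ hammingNorm c = dperp)
    (hg : 1 ≤ g) (hgdef : n + 1 = k + d + g)
    (hgp : 1 ≤ gperp) (hgpdef : k + 1 = dperp + gperp)
    (c : ℕ → ℚ)
    (hW : ∀ x y : ℚ, wEnum C d x y =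
      Mds q n (n + 1 - k) x y +
        ((q : ℚ) - 1) * ∑ i ∈ Finset.range (g + gperp - 1),
          c i * ((n.choose (d + i) : ℚ)) * (x - y) ^ (n - d - i) * y ^ (d + i)) :
    (∀ i ≤ g - 1,
      c i = ((q : ℚ) - 1)⁻¹ * ((n.choose (d + i) : ℚ))⁻¹ *
        ∑ w ∈ Finset.Icc d (d + i),
          ((n - w).choose (n - d - i) : ℚ) * (wtCount C w : ℚ)) ∧
    (∀ i, g ≤ i → i ≤ g + gperp - 2 →
      c i = ((q : ℚ) - 1)⁻¹ * ((n.choose (d + i) : ℚ))⁻¹ *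
        ((∑ w ∈ Finset.Icc d (d + g - 1),
            ((n - w).choose (n - d - i) : ℚ) * (wtCount C w : ℚ)) +
          ∑ w ∈ Finset.Icc (d + g) (d + i),
            ((n - w).choose (n - d - i) : ℚ) *
              ((wtCount C w : ℚ) - (n.choose w : ℚ) *
                ∑ j ∈ Finset.range (w + k - n),
                  (-1 : ℚ) ^ j * (w.choose j : ℚ) * ((q : ℚ) ^ (w + k - n - j) - 1)))) ∧
    (∀ i ≤ g + gperp - 2, ∃ m : ℤ,
      ((q : ℚ) - 1) * (n.choose (d + i) : ℚ) * c i = (m : ℚ)) := by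
    classical
  have hdperp : 1 ≤ dperp := by
    obtain ⟨v, -, hv0, hvn⟩ := hdp2
    have : hammingNorm v ≠ 0 := fun h => hv0 (hammingNorm_eq_zero.mp h)
    omega
  have hq2 : 1 < q := by rw [hq]; exact Fintype.one_lt_card
  have hqQ : ((q : ℚ) - 1) ≠ 0 := by
    have : (1 : ℚ) < (q : ℚ) := by exact_mod_cast hq2
    linarith
  -- eval identities
  have hwE : ∀ x : ℚ, wEnum C d x 1 =
      x ^ n + ∑ w ∈ Finset.Icc d n, (wtCount C w : ℚ) * x ^ (n - w) := by
    intro x; unfold wEnum; simp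
  have hM : ∀ x : ℚ, Mds q n (n + 1 - k) x 1 =
      x ^ n + ∑ w ∈ Finset.Icc (d + g) n, innerA q k n w * x ^ (n - w) := by
    intro x
    have hs : n + 1 - k = d + g := by omega
    unfold Mds
    rw [hs]
    congr 1
    refine Finset.sum_congr rfl fun w hw => ?_
    simp only [Finset.mem_Icc] at hw
    have h1 : w - (d + g) + 1 = w + k - n := by omega
    have h2 : ∀ j : ℕ, w + 1 - (d + g) - j = w + k - n - j := fun j => by omega
    simp only [innerA, h1, h2, one_pow, mul_one]
  have hPQ : ((∑ w ∈ Finset.Icc d n,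
        Polynomial.C (wtCount C w : ℚ) * (Polynomial.X + 1) ^ (n - w))
      - ∑ w ∈ Finset.Icc (d + g) n,
        Polynomial.C (innerA q k n w) * (Polynomial.X + 1) ^ (n - w) : Polynomial ℚ)
      = Polynomial.C ((q : ℚ) - 1) * ∑ i ∈ Finset.range (g + gperp - 1),
          Polynomial.C (c i * (n.choose (d + i) : ℚ)) * Polynomial.X ^ (n - d - i) := by
    apply Polynomial.funext
    intro z
    have h := hW (z + 1) 1
    rw [hwE (z + 1), hM (z + 1)] at h
    simp only [add_sub_cancel_right, one_pow, mul_one] at h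
    simp only [Polynomial.eval_sub, Polynomial.eval_mul, Polynomial.eval_finset_sum,
      Polynomial.eval_C, Polynomial.eval_pow, Polynomial.eval_add, Polynomial.eval_X,
      Polynomial.eval_one]
    linarith [h]
  have key : ∀ i ≤ g + gperp - 2,
      ((q : ℚ) - 1) * (n.choose (d + i) : ℚ) * c i =
        (∑ w ∈ Finset.Icc d (d + i),
          ((n - w).choose (n - d - i) : ℚ) * (wtCount C w : ℚ))
        - ∑ w ∈ Finset.Icc (d + g) (d + i),
          ((n - w).choose (n - d - i) : ℚ) * innerA q k n w := by
    intro i hi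
    have hco := congrArg (fun p => Polynomial.coeff p (n - d - i)) hPQ
    simp only [Polynomial.coeff_sub, Polynomial.finset_sum_coeff, Polynomial.coeff_C_mul,
      Polynomial.coeff_X_add_one_pow, Polynomial.coeff_X_pow] at hco
    rw [Finset.sum_eq_single i (fun b hb hbne => by
        simp only [Finset.mem_range] at hb
        have hne : ¬ (n - d - i = n - d - b) := by omega
        simp [hne]) (fun hni => absurd (Finset.mem_range.mpr (by omega)) hni)] at hco
    simp only [if_true, mul_one] at hco
    have t1 : (∑ w ∈ Finset.Icc d n, (wtCount C w : ℚ) * ((n - w).choose (n - d - i) : ℚ))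
        = ∑ w ∈ Finset.Icc d (d + i), (wtCount C w : ℚ) * ((n - w).choose (n - d - i) : ℚ) := by
      refine (Finset.sum_subset (Finset.Icc_subset_Icc_right (by omega)) ?_).symm
      intro w hw hw'
      simp only [Finset.mem_Icc] at hw hw'
      have : (n - w).choose (n - d - i) = 0 := Nat.choose_eq_zero_of_lt (by omega)
      simp [this]
    have t2 : (∑ w ∈ Finset.Icc (d + g) n, innerA q k n w * ((n - w).choose (n - d - i) : ℚ))
        = ∑ w ∈ Finset.Icc (d + g) (d + i), innerA q k n w * ((n - w).choose (n - d - i) : ℚ) := by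
      refine (Finset.sum_subset (Finset.Icc_subset_Icc_right (by omega)) ?_).symm
      intro w hw hw'
      simp only [Finset.mem_Icc] at hw hw'
      have : (n - w).choose (n - d - i) = 0 := Nat.choose_eq_zero_of_lt (by omega)
      simp [this]
    rw [t1, t2] at hco
    rw [show (∑ w ∈ Finset.Icc d (d + i),
          ((n - w).choose (n - d - i) : ℚ) * (wtCount C w : ℚ))
        = ∑ w ∈ Finset.Icc d (d + i), (wtCount C w : ℚ) * ((n - w).choose (n - d - i) : ℚ)
      from Finset.sum_congr rfl fun w _ => mul_comm _ _,
      show (∑ w ∈ Finset.Icc (d + g) (d + i),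
          ((n - w).choose (n - d - i) : ℚ) * innerA q k n w)
        = ∑ w ∈ Finset.Icc (d + g) (d + i), innerA q k n w * ((n - w).choose (n - d - i) : ℚ)
      from Finset.sum_congr rfl fun w _ => mul_comm _ _]
    linear_combination -hco
  have hch : ∀ i, i ≤ g + gperp - 2 → ((n.choose (d + i) : ℚ)) ≠ 0 := by
    intro i hi
    have : d + i ≤ n := by omega
    exact_mod_cast (Nat.choose_pos this).ne'
  refine ⟨?_, ?_, ?_⟩
  · intro i hi1
    have hi : i ≤ g + gperp - 2 := by omega
    have k' := key i hi
    rw [Finset.Icc_eq_empty (a := d + g) (b := d + i) (by omega), Finset.sum_empty, sub_zero] at k'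
    have hchi := hch i hi
    rw [← k']
    field_simp
  · intro i hgi hi
    have k' := key i hi
    have hsplit : Finset.Icc d (d + i)
        = Finset.Icc d (d + g - 1) ∪ Finset.Icc (d + g) (d + i) := by
      ext w; simp only [Finset.mem_Icc, Finset.mem_union]; omega
    have hdisj : Disjoint (Finset.Icc d (d + g - 1)) (Finset.Icc (d + g) (d + i)) := by
      simp only [Finset.disjoint_left, Finset.mem_Icc]
      intro w hw hw'; omega
    rw [hsplit, Finset.sum_union hdisj] at k'
    have hmerge : (∑ w ∈ Finset.Icc (d + g) (d + i),
          ((n - w).choose (n - d - i) : ℚ) *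
            ((wtCount C w : ℚ) - (n.choose w : ℚ) *
              ∑ j ∈ Finset.range (w + k - n),
                (-1 : ℚ) ^ j * (w.choose j : ℚ) * ((q : ℚ) ^ (w + k - n - j) - 1)))
        = (∑ w ∈ Finset.Icc (d + g) (d + i),
            ((n - w).choose (n - d - i) : ℚ) * (wtCount C w : ℚ))
          - ∑ w ∈ Finset.Icc (d + g) (d + i),
            ((n - w).choose (n - d - i) : ℚ) * innerA q k n w := by
      rw [← Finset.sum_sub_distrib]
      refine Finset.sum_congr rfl fun w _ => ?_
      simp only [innerA]; ring
    rw [hmerge]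
    have hchi := hch i hi
    have hre : (∑ w ∈ Finset.Icc d (d + g - 1),
          ((n - w).choose (n - d - i) : ℚ) * (wtCount C w : ℚ)) +
        ((∑ w ∈ Finset.Icc (d + g) (d + i),
            ((n - w).choose (n - d - i) : ℚ) * (wtCount C w : ℚ))
          - ∑ w ∈ Finset.Icc (d + g) (d + i),
            ((n - w).choose (n - d - i) : ℚ) * innerA q k n w)
        = ((∑ w ∈ Finset.Icc d (d + g - 1),
            ((n - w).choose (n - d - i) : ℚ) * (wtCount C w : ℚ)) +
          ∑ w ∈ Finset.Icc (d + g) (d + i),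
            ((n - w).choose (n - d - i) : ℚ) * (wtCount C w : ℚ))
          - ∑ w ∈ Finset.Icc (d + g) (d + i),
            ((n - w).choose (n - d - i) : ℚ) * innerA q k n w := by ring
    rw [hre, ← k']
    field_simp
  · intro i hi
    refine ⟨(∑ w ∈ Finset.Icc d (d + i),
        (((n - w).choose (n - d - i) : ℤ) * (wtCount C w : ℤ)))
      - ∑ w ∈ Finset.Icc (d + g) (d + i),
        ((n - w).choose (n - d - i) : ℤ) * ((n.choose w : ℤ) *
          ∑ j ∈ Finset.range (w + k - n),
            (-1 : ℤ) ^ j * (w.choose j : ℤ) * ((q : ℤ) ^ (w + k - n - j) - 1)), ?_⟩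
    rw [key i hi]
    simp only [innerA]
    push_cast
    ring
end

section
/- Let C ⊆ F_q^n be an F_q-linear code of dimension k and minimum distance d whose genus g = n+1−k−d satisfies g ≥ 1 (i.e. C is not an MDS code). Then the number ν of d-element subsets of {1,…,n} that are the support of some codeword of C of weight d satisfies ν < C(n,d); equivalently, W_C^{(d)} < (q−1)·C(n,d), i.e. the coefficient c_0 = ν / C(n,d) of the Duursma reduced polynomial of C is strictly less than 1. -/
/-- The support of a word: the set of its nonzero coordinate positions. -/
def wordSupport {F : Type*} [Field F] [DecidableEq F] {n : ℕ} (c : Fin n → F) :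
    Finset (Fin n) :=
  Finset.univ.filter fun i => c i ≠ 0

lemma hammingNorm_eq_card_wordSupport {F : Type*} [Field F] [DecidableEq F] {n : ℕ}
    (c : Fin n → F) : hammingNorm c = (wordSupport c).card := by
  simp [hammingNorm, wordSupport]

lemma mem_wordSupport {F : Type*} [Field F] [DecidableEq F] {n : ℕ}
    {c : Fin n → F} {i : Fin n} : i ∈ wordSupport c ↔ c i ≠ 0 := by
  simp [wordSupport]

/-- Key lemma: if genus ≥ 1, some `d`-set is not a support of a weight-`d` codeword. -/
lemma exists_nonsupport {F : Type*} [Field F] [Fintype F] [DecidableEq F]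
    {n k d : ℕ} (C : Submodule F (Fin n → F))
    (hk : Module.finrank F C = k)
    (hdn : d ≤ n) (hd0 : 1 ≤ d)
    (hg : k + d ≤ n) :
    ∃ T : Finset (Fin n), T.card = d ∧
      ¬ ∃ c ∈ C, hammingNorm c = d ∧ wordSupport c = T := by
  by_contra hcon
  push_neg at hcon
  -- pick a fixed set B of d-1 coordinates
  obtain ⟨B, -, hB⟩ := Finset.exists_subset_card_eq
    (show d - 1 ≤ (Finset.univ : Finset (Fin n)).card by
      rw [Finset.card_univ, Fintype.card_fin]; omega)
  -- for each i ∉ B, get a codeword with support insert i B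
  have hTcard : ∀ i : (Bᶜ : Finset (Fin n)), (insert (i : Fin n) B).card = d := by
    rintro ⟨i, hi⟩
    rw [Finset.card_insert_of_notMem (Finset.mem_compl.1 hi), hB]
    omega
  have h := fun i : (Bᶜ : Finset (Fin n)) => hcon (insert (i : Fin n) B) (hTcard i)
  choose v hvC hvd hvs using h
  -- v is linearly independent
  have hli : LinearIndependent F v := by
    rw [Fintype.linearIndependent_iff]
    intro g hg0 i
    have := congrFun hg0 (i : Fin n)
    rw [Finset.sum_apply] at this
    have hsum : ∀ j ∈ Finset.univ, j ≠ i → (g j • v j) ((i : Fin n)) = 0 := by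
      intro j _ hj
      have hvi : v j (i : Fin n) = 0 := by
        by_contra hne
        have : (i : Fin n) ∈ wordSupport (v j) := mem_wordSupport.2 hne
        rw [hvs j] at this
        rcases Finset.mem_insert.1 this with h1 | h2
        · exact hj (Subtype.ext h1.symm ▸ rfl) |>.elim
        · exact (Finset.mem_compl.1 i.2) h2
      simp [hvi]
    rw [Finset.sum_eq_single i hsum (by simp)] at this
    have hvii : v i (i : Fin n) ≠ 0 := by
      have : (i : Fin n) ∈ wordSupport (v i) := by
        rw [hvs i]; exact Finset.mem_insert_self _ _
      exact mem_wordSupport.1 this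
    have : g i * v i (i : Fin n) = 0 := this
    rcases mul_eq_zero.1 this with h | h
    · exact h
    · exact absurd h hvii
  -- lift to C
  let v' : (Bᶜ : Finset (Fin n)) → C := fun i => ⟨v i, hvC i⟩
  have hli' : LinearIndependent F v' := by
    apply LinearIndependent.of_comp C.subtype
    exact hli
  have hcard := hli'.fintype_card_le_finrank
  rw [hk] at hcard
  have : Fintype.card (Bᶜ : Finset (Fin n)) = n - (d - 1) := by
    rw [Fintype.card_coe, Finset.card_compl, hB, Fintype.card_fin]
  omega

/-- Let `C ⊆ F_q^n` be a linear code of dimension `k` and minimum distance `d` whose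
genus `g = n+1−k−d` is at least `1` (i.e. `C` is not MDS, i.e. `k + d ≤ n`). Then the
number `ν` of `d`-element sets of coordinate positions supporting a codeword of weight
`d` satisfies `ν < C(n,d)`; equivalently `W_C^{(d)} < (q−1)·C(n,d)`, i.e. the
coefficient `c_0 = ν / C(n,d)` of Duursma's reduced polynomial is less than `1`. -/
theorem c0_lt_one_of_positive_genus {F : Type*} [Field F] [Fintype F] [DecidableEq F]
    {n k d : ℕ} (C : Submodule F (Fin n → F))
    (hk : Module.finrank F C = k)
    (hd1 : ∀ c ∈ C, c ≠ 0 → d ≤ hammingNorm c)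
    (hd2 : ∃ c ∈ C, c ≠ 0 ∧ hammingNorm c = d)
    (hg : k + d ≤ n) :
    Nat.card {S : Finset (Fin n) //
        S.card = d ∧ ∃ c ∈ C, hammingNorm c = d ∧ wordSupport c = S} < n.choose d ∧
    wtCount C d < (Fintype.card F - 1) * n.choose d ∧
    ((Nat.card {S : Finset (Fin n) //
        S.card = d ∧ ∃ c ∈ C, hammingNorm c = d ∧ wordSupport c = S} : ℚ) /
      (n.choose d : ℚ)) < 1 := by
  classical
  have hd0 : 1 ≤ d := by
    obtain ⟨c, hcC, hc0, hcd⟩ := hd2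
    have : hammingNorm c ≠ 0 := by
      simpa [hammingNorm_eq_zero] using hc0
    omega
  have hdn : d ≤ n := by omega
  obtain ⟨T, hTcard, hTn⟩ := exists_nonsupport C hk hdn hd0 hg
  -- part 1: ν < choose n d
  set P : Finset (Fin n) → Prop :=
    fun S => S.card = d ∧ ∃ c ∈ C, hammingNorm c = d ∧ wordSupport c = S with hP
  have hnu : Nat.card {S : Finset (Fin n) // P S} < n.choose d := by
    have hinj : Function.Injective
        (fun S : {S : Finset (Fin n) // P S} =>
          (⟨S.1, S.2.1⟩ : {S : Finset (Fin n) // S.card = d})) := by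
      intro a b hab
      have := congrArg (fun x : {S : Finset (Fin n) // S.card = d} => x.1) hab
      exact Subtype.ext this
    have hnm : (⟨T, hTcard⟩ : {S : Finset (Fin n) // S.card = d}) ∉
        Set.range (fun S : {S : Finset (Fin n) // P S} =>
          (⟨S.1, S.2.1⟩ : {S : Finset (Fin n) // S.card = d})) := by
      rintro ⟨⟨S, hS⟩, hST⟩
      apply hTn
      have : S = T := congrArg Subtype.val hST
      rw [← this]
      exact hS.2
    have h1 := Fintype.card_lt_of_injective_of_notMem _ hinj hnm
    have h2 : Fintype.card {S : Finset (Fin n) // S.card = d} = n.choose d := by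
      rw [Fintype.card_finset_len, Fintype.card_fin]
    rw [Nat.card_eq_fintype_card, ← h2]
    exact h1
  refine ⟨hnu, ?_, ?_⟩
  · -- part 2
    -- injection from weight-d codewords to (supports) × (nonzero field elements)
    have hq : 1 ≤ Fintype.card F - 1 := by
      have := Fintype.one_lt_card (α := F)
      omega
    have hW : wtCount C d ≤ Nat.card {S : Finset (Fin n) // P S} * (Fintype.card F - 1) := by
      have hnonempty : ∀ (c : {c : Fin n → F // c ∈ C ∧ hammingNorm c = d}),
          (wordSupport c.1).Nonempty := by
        rintro ⟨c, hcC, hcd⟩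
        rw [← Finset.card_pos, ← hammingNorm_eq_card_wordSupport, hcd]
        omega
      let f : {c : Fin n → F // c ∈ C ∧ hammingNorm c = d} →
          {S : Finset (Fin n) // P S} × {a : F // a ≠ 0} := fun c =>
        (⟨wordSupport c.1, by
            rw [← hammingNorm_eq_card_wordSupport, c.2.2], c.1, c.2.1, c.2.2, rfl⟩,
         ⟨c.1 ((wordSupport c.1).min' (hnonempty c)), by
            have := (wordSupport c.1).min'_mem (hnonempty c)
            exact mem_wordSupport.1 this⟩)
      have hfinj : Function.Injective f := by
        rintro ⟨c, hcC, hcd⟩ ⟨c', hcC', hcd'⟩ hcc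
        have hS : wordSupport c = wordSupport c' := by
          have := congrArg (fun x => (x.1 : Finset (Fin n))) hcc
          simpa [f] using this
        have hval : c ((wordSupport c).min' (hnonempty ⟨c, hcC, hcd⟩)) =
            c' ((wordSupport c').min' (hnonempty ⟨c', hcC', hcd'⟩)) := by
          have := congrArg (fun x => (x.2 : F)) hcc
          simpa [f] using this
        set i₀ := (wordSupport c).min' (hnonempty ⟨c, hcC, hcd⟩) with hi₀
        have hmin : (wordSupport c').min' (hnonempty ⟨c', hcC', hcd'⟩) = i₀ := by
          rw [hi₀]
          congr 1
          exact hS.symm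
        have hval' : c i₀ = c' i₀ := by
          rw [hval, hmin]
        apply Subtype.ext
        show c = c'
        by_contra hne
        have hsub : c - c' ∈ C := C.sub_mem hcC hcC'
        have hne' : c - c' ≠ 0 := sub_ne_zero.2 hne
        have hle := hd1 _ hsub hne'
        have hsupp : wordSupport (c - c') ⊆ (wordSupport c).erase i₀ := by
          intro j hj
          have hj' : c j - c' j ≠ 0 := by simpa using mem_wordSupport.1 hj
          refine Finset.mem_erase.2 ⟨?_, ?_⟩
          · rintro rfl
            exact hj' (by rw [hval']; ring)
          · by_contra hjc
            have h1 : c j = 0 := by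
              by_contra h; exact hjc (mem_wordSupport.2 h)
            have h2 : c' j = 0 := by
              by_contra h
              exact hjc (hS ▸ mem_wordSupport.2 h)
            exact hj' (by rw [h1, h2]; ring)
        have : hammingNorm (c - c') ≤ d - 1 := by
          rw [hammingNorm_eq_card_wordSupport]
          calc (wordSupport (c - c')).card ≤ ((wordSupport c).erase i₀).card :=
                Finset.card_le_card hsupp
            _ = d - 1 := by
                rw [Finset.card_erase_of_mem ((wordSupport c).min'_mem _),
                  ← hammingNorm_eq_card_wordSupport, hcd]
        omega
      have := Nat.card_le_card_of_injective f hfinj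
      rw [wtCount]
      calc Nat.card {c : Fin n → F // c ∈ C ∧ hammingNorm c = d}
          ≤ Nat.card ({S : Finset (Fin n) // P S} × {a : F // a ≠ 0}) := this
        _ = Nat.card {S : Finset (Fin n) // P S} * (Fintype.card F - 1) := by
            rw [Nat.card_prod]
            congr 1
            rw [Nat.card_eq_fintype_card]
            rw [Fintype.card_subtype_compl (p := fun a : F => a = 0)]
            simp [Fintype.card_subtype_eq]
    calc wtCount C d ≤ Nat.card {S : Finset (Fin n) // P S} * (Fintype.card F - 1) := hW
      _ < n.choose d * (Fintype.card F - 1) := by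
          exact (Nat.mul_lt_mul_right (by omega)).2 hnu
      _ = (Fintype.card F - 1) * n.choose d := by ring
  · -- part 3
    rw [div_lt_one (by
      have := Nat.choose_pos hdn
      positivity)]
    exact_mod_cast hnu
end

section
/- Let q ≥ 2 be an integer, g ≥ 1 and g⊥ ≥ 1 integers, and let P, P⊥, D, D⊥ ∈ ℚ[t] be polynomials such that deg P = g + g⊥, P(t) = (1−t)(1−qt)·D(t) + t^{g}, P⊥(t) = (1−t)(1−qt)·D⊥(t) + t^{g⊥}, and P⊥(t) = q^{g}·t^{g+g⊥}·P(1/(qt)) for all nonzero t. If every complex root of P has absolute value 1/√q, then g = g⊥ and P⊥ = P; in particular P satisfies the functional equation P(t) = q^{g} t^{2g} P(1/(qt)) for all nonzero t. -/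
open Polynomial

private noncomputable def Qaux (P : ℚ[X]) (q : ℚ) (g n : ℕ) : ℚ[X] :=
  ∑ i ∈ Finset.range (n+1), C (P.coeff i * q ^ g * (q⁻¹) ^ i) * X ^ (n - i)

private lemma aeval_Qaux {K : Type*} [Field K] [Algebra ℚ K] (P : ℚ[X]) (q : ℚ) (g n : ℕ)
    (hn : P.natDegree < n + 1) (hq : q ≠ 0) (z : K) (hz : z ≠ 0) :
    (aeval z) (Qaux P q g n) =
      algebraMap ℚ K q ^ g * z ^ n * (aeval ((algebraMap ℚ K q * z)⁻¹)) P := by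
  have hqK : algebraMap ℚ K q ≠ 0 := by
    simpa using (map_ne_zero_iff _ (algebraMap ℚ K).injective).mpr hq
  rw [Polynomial.aeval_eq_sum_range' hn, Finset.mul_sum, Qaux, map_sum]
  refine Finset.sum_congr rfl fun i hi => ?_
  have hin : i ≤ n := Nat.lt_succ_iff.mp (Finset.mem_range.mp hi)
  simp only [map_mul, map_pow, map_inv₀, aeval_C, aeval_X, Algebra.smul_def, mul_inv]
  rw [pow_sub₀ z hz hin]
  field_simp
  ring_nf
  rw [mul_assoc _ (z ^ i), ← mul_pow, mul_inv_cancel₀ hz, one_pow, mul_one]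


/-- Let `q ≥ 2`, `g, g⊥ ≥ 1`, and let `P, P⊥, D, D⊥ ∈ ℚ[t]` with `deg P = g + g⊥`,
`P(t) = (1−t)(1−qt)·D(t) + t^g`, `P⊥(t) = (1−t)(1−qt)·D⊥(t) + t^{g⊥}`, and
`P⊥(t) = q^g·t^{g+g⊥}·P(1/(qt))` for all nonzero `t`.  If every complex root of `P`
has absolute value `1/√q`, then `g = g⊥`, `P⊥ = P`, and in particular
`P(t) = q^g t^{2g} P(1/(qt))` for all nonzero `t`. -/
theorem rha_implies_formal_self_duality (q g gperp : ℕ) (hq : 2 ≤ q)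
    (hg : 1 ≤ g) (hgp : 1 ≤ gperp)
    (P Pd D Dd : ℚ[X])
    (hdeg : P.natDegree = g + gperp)
    (hPD : ∀ t : ℚ, P.eval t = (1 - t) * (1 - q * t) * D.eval t + t ^ g)
    (hPDd : ∀ t : ℚ, Pd.eval t = (1 - t) * (1 - q * t) * Dd.eval t + t ^ gperp)
    (hfe : ∀ t : ℚ, t ≠ 0 →
      Pd.eval t = (q : ℚ) ^ g * t ^ (g + gperp) * P.eval (1 / (q * t)))
    (hroots : ∀ z : ℂ, aeval z P = 0 → ‖z‖ = 1 / Real.sqrt q) :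
    g = gperp ∧ Pd = P ∧
      ∀ t : ℚ, t ≠ 0 → P.eval t = (q : ℚ) ^ g * t ^ (2 * g) * P.eval (1 / (q * t)) := by
  have hq0 : (q : ℚ) ≠ 0 := by
    have : 0 < q := by omega
    exact_mod_cast this.ne'
  have hqC : (q : ℂ) ≠ 0 := by
    have : 0 < q := by omega
    exact_mod_cast this.ne'
  have hPne : P ≠ 0 := by
    intro h
    rw [h, natDegree_zero] at hdeg
    omega
  -- evaluations at 1
  have hP1 : P.eval 1 = 1 := by simpa using hPD 1
  have hPd1 : Pd.eval 1 = 1 := by simpa using hPDd 1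
  -- infinite set of nonzero rationals
  have hinf : ({t : ℚ | t ≠ 0}).Infinite := by
    have := (Set.finite_singleton (0 : ℚ)).infinite_compl
    simpa [Set.compl_singleton_eq, Set.compl_def] using this
  -- Pd is the reversed polynomial
  have hPdQ : Pd = Qaux P (q : ℚ) g (g + gperp) := by
    apply Polynomial.eq_of_infinite_eval_eq
    refine hinf.mono fun t ht => ?_
    have ht' : t ≠ 0 := ht
    have h1 := hfe t ht'
    have h2 := aeval_Qaux (K := ℚ) P (q : ℚ) g (g + gperp)
      (by omega) hq0 t ht'
    simp only [Set.mem_setOf_eq]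
    rw [h1]
    have : (aeval t) (Qaux P (q:ℚ) g (g+gperp)) = (Qaux P (q:ℚ) g (g+gperp)).eval t := by
      simp [aeval_def, eval₂_eq_eval_map, Polynomial.map_id]
    rw [← this, h2]
    have : (aeval ((algebraMap ℚ ℚ (q:ℚ) * t)⁻¹)) P = P.eval (1 / (q * t)) := by
      simp [aeval_def, eval₂_eq_eval_map, Polynomial.map_id, one_div]
    rw [this]
    simp
  -- bridge to ℂ
  have hbridge : ∀ z : ℂ, z ≠ 0 →
      (aeval z) Pd = (q : ℂ) ^ g * z ^ (g + gperp) * (aeval (((q:ℂ) * z)⁻¹)) P := by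
    intro z hz
    rw [hPdQ]
    have h2 := aeval_Qaux (K := ℂ) P (q : ℚ) g (g + gperp) (by omega) hq0 z hz
    have hmap : algebraMap ℚ ℂ (q : ℚ) = (q : ℂ) := by
      simp [map_natCast]
    rw [h2, hmap]
  -- complex factorization
  set f := algebraMap ℚ ℂ with hf
  have hfin : Function.Injective f := (algebraMap ℚ ℂ).injective
  set Pc := P.map f with hPc
  have hPcne : Pc ≠ 0 := by
    simpa [hPc] using (Polynomial.map_ne_zero_iff hfin).mpr hPne
  have hsplit : Splits Pc := IsAlgClosed.splits Pc
  set R := Pc.roots with hR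
  have hcard : Multiset.card R = g + gperp := by
    have h1 := (splits_iff_card_roots).mp hsplit
    rw [hPc, natDegree_map, hdeg] at h1
    exact h1
  have hfact : Pc = C Pc.leadingCoeff * (R.map fun a => X - C a).prod :=
    hsplit.eq_prod_roots
  have haev : ∀ w : ℂ, (aeval w) P = Pc.eval w := by
    intro w; rw [hPc, aeval_def, eval_map]
  -- root properties
  have hmem : ∀ α ∈ R, ‖α‖ = 1 / Real.sqrt q := by
    intro α hα
    have := (Polynomial.mem_roots'.mp hα).2
    exact hroots α (by rw [haev]; exact this)
  have hsqrtpos : 0 < Real.sqrt q := Real.sqrt_pos.mpr (by positivity)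
  have hα0 : ∀ α ∈ R, α ≠ 0 := by
    intro α hα h0
    have := hmem α hα
    rw [h0, norm_zero] at this
    have hpos : (0:ℝ) < 1 / Real.sqrt q := by positivity
    linarith
  have hconj : ∀ α ∈ R, ((q:ℂ) * α)⁻¹ = (starRingEnd ℂ) α := by
    intro α hα
    have habs := hmem α hα
    have hns : Complex.normSq α = 1 / q := by
      rw [← Complex.sq_norm, habs]
      rw [div_pow, one_pow, Real.sq_sqrt (by positivity)]
    refine inv_eq_of_mul_eq_one_right ?_
    rw [mul_assoc, Complex.mul_conj, hns]
    push_cast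
    field_simp
  have hmapconj : Pc.map (starRingEnd ℂ) = Pc := by
    rw [hPc, Polynomial.map_map]
    congr 1
    exact Subsingleton.elim _ _
  have hRconj : R.map (starRingEnd ℂ) = R := by
    have := hsplit.roots_map (starRingEnd ℂ)
    rw [hmapconj] at this
    exact this.symm
  have hRmap : R.map (fun α => ((q:ℂ) * α)⁻¹) = R := by
    rw [Multiset.map_congr rfl hconj, hRconj]
  -- nonzero coefficients
  have han : P.leadingCoeff ≠ 0 := leadingCoeff_ne_zero.mpr hPne
  have hAn : f P.leadingCoeff ≠ 0 := fun h => han (hfin (by simpa using h))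
  have hLC : Pc.leadingCoeff = f P.leadingCoeff := leadingCoeff_map f
  have ha0 : P.coeff 0 ≠ 0 := by
    intro h
    have h1 : (aeval (0:ℂ)) P = 0 := by
      rw [haev, ← coeff_zero_eq_eval_zero, hPc, coeff_map, h, map_zero]
    have h2 := hroots 0 h1
    rw [norm_zero] at h2
    have hpos : (0:ℝ) < 1 / Real.sqrt q := by positivity
    linarith
  have hA0 : f (P.coeff 0) ≠ 0 := fun h => ha0 (hfin (by simpa using h))
  -- eval formula
  have hevalP : ∀ w : ℂ, (aeval w) P
      = f P.leadingCoeff * (R.map fun α => w - α).prod := by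
    intro w
    rw [haev]
    conv_lhs => rw [hfact]
    rw [eval_mul, eval_C, hLC, eval_multiset_prod, Multiset.map_map]
    congr 2
    apply Multiset.map_congr rfl
    intro α _
    simp
  have hprod0 : (R.map fun α => -α).prod = f (P.coeff 0) / f P.leadingCoeff := by
    have h0 := hevalP 0
    have : (aeval (0:ℂ)) P = f (P.coeff 0) := by
      rw [haev, ← coeff_zero_eq_eval_zero, hPc, coeff_map]
    rw [this] at h0
    simp only [zero_sub] at h0
    rw [eq_div_iff hAn, h0, mul_comm]
  -- the key pointwise identity over ℂ
  set c : ℚ := (q : ℚ) ^ g * P.coeff 0 / P.leadingCoeff with hc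
  have hkey : ∀ z : ℂ, z ≠ 0 → (aeval z) Pd = f c * (aeval z) P := by
    intro z hz
    rw [hbridge z hz, hevalP, hevalP]
    have hzn : z ^ (g + gperp) = (R.map fun _ => z).prod := by
      rw [Multiset.map_const', Multiset.prod_replicate, hcard]
    calc (q:ℂ) ^ g * z ^ (g+gperp) * (f P.leadingCoeff *
            (R.map fun α => ((q:ℂ)*z)⁻¹ - α).prod)
        = (q:ℂ) ^ g * f P.leadingCoeff *
            ((R.map fun _ => z).prod * (R.map fun α => ((q:ℂ)*z)⁻¹ - α).prod) := by
          rw [← hzn]; ring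
      _ = (q:ℂ) ^ g * f P.leadingCoeff *
            (R.map fun α => z * (((q:ℂ)*z)⁻¹ - α)).prod := by
          rw [Multiset.prod_map_mul]
      _ = (q:ℂ) ^ g * f P.leadingCoeff *
            (R.map fun α => (-α) * (z - ((q:ℂ)*α)⁻¹)).prod := by
          congr 2
          apply Multiset.map_congr rfl
          intro α hα
          have hα' := hα0 α hα
          field_simp
          ring
      _ = (q:ℂ) ^ g * f P.leadingCoeff *
            ((R.map fun α => -α).prod * (R.map fun α => z - ((q:ℂ)*α)⁻¹).prod) := by
          rw [Multiset.prod_map_mul]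
      _ = (q:ℂ) ^ g * f P.leadingCoeff *
            ((f (P.coeff 0) / f P.leadingCoeff) * (R.map fun β => z - β).prod) := by
          have h1 : (R.map fun α => z - ((q:ℂ)*α)⁻¹) = R.map fun β => z - β := by
            have h2 : (R.map fun α => z - ((q:ℂ)*α)⁻¹)
                = (R.map fun α => ((q:ℂ)*α)⁻¹).map (fun β => z - β) := by
              rw [Multiset.map_map]; rfl
            rw [h2, hRmap]
          rw [h1, hprod0]
      _ = f c * (f P.leadingCoeff * (R.map fun β => z - β).prod) := by
          rw [hc]
          push_cast [map_div₀, map_mul, map_pow]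
          have hmapq : f (q : ℚ) = (q : ℂ) := by simp [hf, map_natCast]
          rw [hmapq]
          field_simp
  -- descend to ℚ: Pd = C c * P
  have hPdc : Pd = C c * P := by
    apply Polynomial.eq_of_infinite_eval_eq
    refine hinf.mono fun t ht => ?_
    have ht' : (t : ℚ) ≠ 0 := ht
    simp only [Set.mem_setOf_eq]
    apply hfin
    have htC : f t ≠ 0 := fun h => ht' (hfin (by simpa using h))
    have h1 : f (Pd.eval t) = (aeval (f t)) Pd := by
      rw [aeval_algebraMap_apply]
      simp [aeval_def, eval₂_eq_eval_map, Polynomial.map_id]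
    have h2 : f (P.eval t) = (aeval (f t)) P := by
      rw [aeval_algebraMap_apply]
      simp [aeval_def, eval₂_eq_eval_map, Polynomial.map_id]
    rw [h1, hkey (f t) htC, ← h2]
    rw [eval_mul, eval_C, map_mul]
  have hc1 : c = 1 := by
    have := hPd1
    rw [hPdc, eval_mul, eval_C, hP1, mul_one] at this
    exact this
  have hPdP : Pd = P := by rw [hPdc, hc1, map_one, one_mul]
  -- g = gperp
  have hPq : P.eval (1/(q:ℚ)) = (1/(q:ℚ))^g := by
    have := hPD (1/(q:ℚ))
    rw [mul_one_div, div_self hq0] at this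
    simpa using this
  have hPdq : Pd.eval (1/(q:ℚ)) = (1/(q:ℚ))^gperp := by
    have := hPDd (1/(q:ℚ))
    rw [mul_one_div, div_self hq0] at this
    simpa using this
  have hpow : (1/(q:ℚ))^g = (1/(q:ℚ))^gperp := by
    rw [← hPq, ← hPdq, hPdP]
  have hgg : g = gperp := by
    have hq1 : (q:ℚ)^g = (q:ℚ)^gperp := by
      rw [one_div, inv_pow, inv_pow] at hpow
      exact inv_injective hpow
    have : q ^ g = q ^ gperp := by exact_mod_cast hq1
    exact Nat.pow_right_injective hq this
  refine ⟨hgg, hPdP, fun t ht => ?_⟩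
  have := hfe t ht
  rw [hPdP, ← hgg] at this
  rw [two_mul]
  exact this
end

section
/- Let q ≥ 2, g ≥ 1, k ≥ 1 and 1 ≤ d ≤ 2k be integers and ν ≥ 1 an integer. Suppose P ∈ ℝ[t] is a polynomial of degree 2g satisfying P(t) = q^{g} t^{2g} P(1/(qt)) for all nonzero t, with P(1) = 1 and P(0) = ν / C(2k,d), and assume every complex root of P has absolute value 1/√q. Then q ≤ ((C(2k,d)/ν)^{1/(2g)} + 1)^2; in particular q ≤ (C(2k,d)^{1/(2g)} + 1)^2. -/
open Polynomial

private lemma prod_const_aux {s : Multiset ℝ} {a : ℝ} (h : ∀ x ∈ s, x = a) :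
    s.prod = a ^ Multiset.card s := by
  induction s using Multiset.induction_on with
  | empty => simp
  | cons b t ih =>
    rw [Multiset.prod_cons, h b (Multiset.mem_cons_self _ _),
      ih (fun x hx => h x (Multiset.mem_cons_of_mem hx)), Multiset.card_cons, pow_succ,
      mul_comm]

private lemma pow_le_prod_aux {s : Multiset ℝ} {a : ℝ} (ha : 0 ≤ a) (h : ∀ x ∈ s, a ≤ x) :
    a ^ Multiset.card s ≤ s.prod := by
  induction s using Multiset.induction_on with
  | empty => simp
  | cons b t ih =>
    rw [Multiset.prod_cons, Multiset.card_cons, pow_succ, mul_comm]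
    exact mul_le_mul (h b (Multiset.mem_cons_self _ _))
      (ih (fun x hx => h x (Multiset.mem_cons_of_mem hx))) (pow_nonneg ha _)
      (le_trans ha (h b (Multiset.mem_cons_self _ _)))

/-- Let `q ≥ 2`, `g, k, ν ≥ 1` and `1 ≤ d ≤ 2k` be integers. Suppose `P ∈ ℝ[t]` has
degree `2g`, satisfies the functional equation `P(t) = q^g t^{2g} P(1/(qt))` for all
nonzero `t`, has `P(1) = 1` and `P(0) = ν / C(2k,d)`, and all complex roots of `P`
have absolute value `1/√q`.  Then `q ≤ ((C(2k,d)/ν)^{1/(2g)} + 1)²`; in particular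
`q ≤ (C(2k,d)^{1/(2g)} + 1)²`. -/
theorem rha_bounds_field_cardinality (q g k d ν : ℕ) (hq : 2 ≤ q) (hg : 1 ≤ g)
    (hk : 1 ≤ k) (hd : 1 ≤ d) (hd2 : d ≤ 2 * k) (hν : 1 ≤ ν)
    (P : ℝ[X])
    (hdeg : P.natDegree = 2 * g)
    (hfe : ∀ t : ℝ, t ≠ 0 →
      P.eval t = (q : ℝ) ^ g * t ^ (2 * g) * P.eval (1 / (q * t)))
    (h1 : P.eval 1 = 1)
    (h0 : P.eval 0 = (ν : ℝ) / ((2 * k).choose d : ℝ))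
    (hroots : ∀ z : ℂ, aeval z P = 0 → ‖z‖ = 1 / Real.sqrt q) :
    (q : ℝ) ≤ ((((2 * k).choose d : ℝ) / (ν : ℝ)) ^ ((1 : ℝ) / (2 * g)) + 1) ^ 2 ∧
    (q : ℝ) ≤ ((((2 * k).choose d : ℝ)) ^ ((1 : ℝ) / (2 * g)) + 1) ^ 2 := by
  classical
  set Cb : ℝ := ((2 * k).choose d : ℝ) with hCb
  have hC1 : (1 : ℝ) ≤ Cb := by
    have h : 1 ≤ (2 * k).choose d := Nat.choose_pos hd2
    rw [hCb]
    exact_mod_cast h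
  have hC0 : (0 : ℝ) < Cb := lt_of_lt_of_le one_pos hC1
  have hν1 : (1 : ℝ) ≤ (ν : ℝ) := by exact_mod_cast hν
  have hν0 : (0 : ℝ) < (ν : ℝ) := lt_of_lt_of_le one_pos hν1
  have hq1 : (1 : ℝ) < (q : ℝ) := by exact_mod_cast lt_of_lt_of_le one_lt_two hq
  have hq0 : (0 : ℝ) < (q : ℝ) := lt_trans one_pos hq1
  have hsq1 : (1 : ℝ) < Real.sqrt q := by
    rw [show (1 : ℝ) = Real.sqrt 1 by simp]
    exact Real.sqrt_lt_sqrt (by norm_num) hq1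
  have hsq0 : (0 : ℝ) < Real.sqrt q := lt_trans one_pos hsq1
  set Q : ℂ[X] := P.map (algebraMap ℝ ℂ) with hQ
  have hP0 : P ≠ 0 := by
    intro h; rw [h] at h1; simp at h1
  have hQ0 : Q ≠ 0 := (Polynomial.map_ne_zero_iff (algebraMap ℝ ℂ).injective).mpr hP0
  have hsplit : Q.Splits := IsAlgClosed.splits Q
  have hcard : Multiset.card Q.roots = 2 * g := by
    rw [Polynomial.splits_iff_card_roots.mp hsplit, hQ, Polynomial.natDegree_map, hdeg]
  have hroots' : ∀ z ∈ Q.roots, ‖z‖ = 1 / Real.sqrt q := by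
    intro z hz
    apply hroots
    rw [aeval_def, ← Polynomial.eval_map]
    exact (Polynomial.mem_roots hQ0).mp hz
  have hfac := hsplit.eq_prod_roots
  have heval : ∀ x : ℝ, Q.eval ((x : ℝ) : ℂ) = ((P.eval x : ℝ) : ℂ) := by
    intro x
    rw [hQ, Polynomial.eval_map]
    have := Polynomial.eval₂_at_apply (p := P) (algebraMap ℝ ℂ) x
    simpa using this
  set A : ℝ := ‖Q.leadingCoeff‖ with hA
  -- abs of eval at point x equals A * prod of |x - r|
  have habs : ∀ x : ℂ, ‖Q.eval x‖ =
      A * (Q.roots.map (fun a => ‖x - a‖)).prod := by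
    intro x
    conv_lhs => rw [hfac]
    rw [Polynomial.eval_mul, Polynomial.eval_C, norm_mul, Polynomial.eval_multiset_prod,
      ← normHom_apply (Multiset.prod _), map_multiset_prod, Multiset.map_map, Multiset.map_map]
    congr 1
    simp [Function.comp, normHom_apply]
  -- value at 0
  have h0' : A * (1 / Real.sqrt q) ^ (2 * g) = (ν : ℝ) / Cb := by
    have e1 : ‖Q.eval 0‖ = (ν : ℝ) / Cb := by
      have := heval 0
      simp only [Complex.ofReal_zero] at this
      rw [this, h0]
      rw [Complex.norm_real, Real.norm_eq_abs, abs_of_nonneg (le_of_lt (div_pos hν0 hC0))]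
    rw [habs 0] at e1
    rw [← e1]
    congr 1
    rw [show (Q.roots.map (fun a => ‖(0:ℂ) - a‖)) =
        Q.roots.map (fun a => ‖a‖) from ?_]
    · rw [prod_const_aux (a := 1 / Real.sqrt q) ?_, Multiset.card_map, hcard]
      intro x hx
      obtain ⟨z, hz, rfl⟩ := Multiset.mem_map.mp hx
      exact hroots' z hz
    · apply Multiset.map_congr rfl
      intro z hz
      rw [zero_sub, norm_neg]
  have hA' : A = ((ν : ℝ) / Cb) * (Real.sqrt q) ^ (2 * g) := by
    rw [← h0']
    field_simp
    rw [mul_assoc, ← mul_pow, one_div_mul_cancel hsq0.ne', one_pow, mul_one]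
  -- value at 1
  have h1' : ((ν : ℝ) / Cb) * (Real.sqrt q - 1) ^ (2 * g) ≤ 1 := by
    have e1 : ‖Q.eval 1‖ = 1 := by
      have := heval 1
      simp only [Complex.ofReal_one] at this
      rw [this, h1]; simp
    rw [habs 1] at e1
    have hb : (1 - 1 / Real.sqrt q) ^ (2 * g) ≤
        (Q.roots.map (fun a => ‖1 - a‖)).prod := by
      have := pow_le_prod_aux (s := Q.roots.map (fun a => ‖(1:ℂ) - a‖))
        (a := 1 - 1 / Real.sqrt q) ?_ ?_
      · rwa [Multiset.card_map, hcard] at this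
      · have : 1 / Real.sqrt q < 1 := by
          rw [div_lt_one hsq0]; exact hsq1
        linarith
      · intro x hx
        obtain ⟨z, hz, rfl⟩ := Multiset.mem_map.mp hx
        calc 1 - 1 / Real.sqrt q = ‖(1:ℂ)‖ - ‖z‖ := by
              rw [hroots' z hz]; simp
          _ ≤ ‖1 - z‖ := norm_sub_norm_le 1 z
    have hA0 : 0 ≤ A := norm_nonneg _
    have : A * (1 - 1 / Real.sqrt q) ^ (2 * g) ≤ 1 := by
      calc A * (1 - 1 / Real.sqrt q) ^ (2 * g)
          ≤ A * (Q.roots.map (fun a => ‖1 - a‖)).prod :=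
            mul_le_mul_of_nonneg_left hb hA0
        _ = 1 := e1
    calc ((ν : ℝ) / Cb) * (Real.sqrt q - 1) ^ (2 * g)
        = A * (1 - 1 / Real.sqrt q) ^ (2 * g) := by
          rw [hA', mul_assoc, ← mul_pow]
          congr 2
          field_simp
      _ ≤ 1 := this
  -- conclude (√q - 1)^(2g) ≤ Cb / ν
  have hkey : (Real.sqrt q - 1) ^ (2 * g) ≤ Cb / (ν : ℝ) := by
    rw [div_mul_eq_mul_div, div_le_one hC0] at h1'
    rw [le_div_iff₀ hν0]
    linarith [h1']
  have h2g0 : (0 : ℝ) < 2 * g := by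
    have : (1 : ℝ) ≤ (g : ℝ) := by exact_mod_cast hg
    linarith
  have hsqm1 : (0 : ℝ) ≤ Real.sqrt q - 1 := by linarith
  -- take (1/(2g))-th power
  have hroot : Real.sqrt q - 1 ≤ (Cb / (ν : ℝ)) ^ ((1 : ℝ) / (2 * g)) := by
    have step := Real.rpow_le_rpow (pow_nonneg hsqm1 _) hkey
      (le_of_lt (one_div_pos.mpr h2g0))
    have lhs_eq : ((Real.sqrt q - 1) ^ (2 * g) : ℝ) ^ ((1 : ℝ) / (2 * g)) =
        Real.sqrt q - 1 := by
      rw [← Real.rpow_natCast (Real.sqrt q - 1) (2 * g), ← Real.rpow_mul hsqm1]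
      rw [show ((2 * g : ℕ) : ℝ) * (1 / (2 * (g : ℝ))) = 1 by
        push_cast; field_simp]
      exact Real.rpow_one _
    rwa [lhs_eq] at step
  have hmain : (q : ℝ) ≤ ((Cb / (ν : ℝ)) ^ ((1 : ℝ) / (2 * g)) + 1) ^ 2 := by
    have hsq : Real.sqrt q ≤ (Cb / (ν : ℝ)) ^ ((1 : ℝ) / (2 * g)) + 1 := by linarith
    calc (q : ℝ) = (Real.sqrt q) ^ 2 := (Real.sq_sqrt (le_of_lt hq0)).symm
      _ ≤ ((Cb / (ν : ℝ)) ^ ((1 : ℝ) / (2 * g)) + 1) ^ 2 :=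
          pow_le_pow_left₀ (Real.sqrt_nonneg _) hsq 2
  refine ⟨hmain, le_trans hmain ?_⟩
  have hdiv : Cb / (ν : ℝ) ≤ Cb := div_le_self (le_of_lt hC0) hν1
  have hr : (Cb / (ν : ℝ)) ^ ((1 : ℝ) / (2 * g)) ≤ Cb ^ ((1 : ℝ) / (2 * g)) :=
    Real.rpow_le_rpow (div_nonneg (le_of_lt hC0) (le_of_lt hν0)) hdiv
      (le_of_lt (one_div_pos.mpr h2g0))
  have h1le : (0 : ℝ) ≤ (Cb / (ν : ℝ)) ^ ((1 : ℝ) / (2 * g)) + 1 := by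
    have := Real.rpow_nonneg (div_nonneg (le_of_lt hC0) (le_of_lt hν0)) ((1 : ℝ) / (2 * g))
    linarith
  exact pow_le_pow_left₀ h1le (by linarith) 2
end

section
/- Let q ≥ 2 and g ≥ 1 be integers, let D ∈ ℚ[t] be a polynomial, and set P(t) := (1−t)(1−qt)·D(t) + t^{g}. Then P(t) = q^{g} t^{2g} P(1/(qt)) holds for all nonzero t if and only if D(t) = q^{g−1} t^{2g−2} D(1/(qt)) holds for all nonzero t. -/
open Polynomial

lemma rev_eval_aux (D : ℚ[X]) (x : ℚ) (hx : x ≠ 0) :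
    D.eval (1 / x) = (Polynomial.reverse D).eval x / x ^ D.natDegree := by
  have hinv : Invertible (1 / x : ℚ) := invertibleOfNonzero (by simp [hx])
  have h := Polynomial.eval₂_reverse_mul_pow (RingHom.id ℚ) (1 / x) D
  rw [invOf_eq_inv (1 / x), one_div, inv_inv] at h
  simp only [eval₂_eq_eval_map, Polynomial.map_id] at h
  have hx' : (1 / x : ℚ) ^ D.natDegree ≠ 0 := by positivity
  field_simp at h ⊢
  rw [← h, mul_assoc, ← mul_pow, one_div_mul_cancel hx, one_pow, mul_one]

/-- Let `q ≥ 2` and `g ≥ 1` be integers, `D ∈ ℚ[t]`, and set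
`P(t) := (1−t)(1−qt)·D(t) + t^g`.  Then `P(t) = q^g t^{2g} P(1/(qt))` for all nonzero
`t` if and only if `D(t) = q^{g−1} t^{2g−2} D(1/(qt))` for all nonzero `t`. -/
theorem functional_equation_P_iff_D (q g : ℕ) (hq : 2 ≤ q) (hg : 1 ≤ g)
    (D : ℚ[X]) (P : ℚ[X])
    (hP : ∀ t : ℚ, P.eval t = (1 - t) * (1 - q * t) * D.eval t + t ^ g) :
    (∀ t : ℚ, t ≠ 0 →
        P.eval t = (q : ℚ) ^ g * t ^ (2 * g) * P.eval (1 / (q * t))) ↔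
      (∀ t : ℚ, t ≠ 0 →
        D.eval t = (q : ℚ) ^ (g - 1) * t ^ (2 * g - 2) * D.eval (1 / (q * t))) := by
  obtain ⟨g', rfl⟩ : ∃ g', g = g' + 1 := ⟨g - 1, (Nat.succ_pred_eq_of_pos hg).symm⟩
  have hq0 : (q : ℚ) ≠ 0 := by
    have : q ≠ 0 := by omega
    exact_mod_cast Nat.cast_ne_zero.mpr this
  simp only [show g' + 1 - 1 = g' from rfl, show 2 * (g' + 1) - 2 = 2 * g' by omega]
  have key : ∀ t : ℚ, t ≠ 0 →
      (q : ℚ) ^ (g' + 1) * t ^ (2 * (g' + 1)) * P.eval (1 / (q * t)) =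
        (1 - t) * (1 - q * t) * ((q : ℚ) ^ g' * t ^ (2 * g') * D.eval (1 / (q * t)))
          + t ^ (g' + 1) := by
    intro t ht
    rw [hP, div_pow, one_pow]
    field_simp
    ring
  constructor
  · intro hPf
    set n := D.natDegree with hn
    set L : ℚ[X] := (C (q : ℚ) * X) ^ n * D with hL
    set R : ℚ[X] := C ((q : ℚ) ^ g') * X ^ (2 * g') * (D.reverse.comp (C (q : ℚ) * X))
      with hR
    have main : ∀ t : ℚ, t ≠ 0 →
        (1 - t) * (1 - q * t) * D.eval t =
          (1 - t) * (1 - q * t) * ((q : ℚ) ^ g' * t ^ (2 * g') * D.eval (1 / (q * t))) := by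
      intro t ht
      have h1 := hPf t ht
      rw [hP t, key t ht] at h1
      linarith
    have hLR : L = R := by
      apply Polynomial.eq_of_infinite_eval_eq
      apply Set.Infinite.mono (s := (({0, 1, (1 / q : ℚ)} : Set ℚ))ᶜ)
      swap
      · exact Set.Finite.infinite_compl (by simp)
      intro x hx
      simp only [Set.mem_compl_iff, Set.mem_insert_iff, Set.mem_singleton_iff, not_or] at hx
      obtain ⟨hx0, hx1, hxq⟩ := hx
      have hqx : (q : ℚ) * x ≠ 0 := mul_ne_zero hq0 hx0
      have h1x : (1 : ℚ) - x ≠ 0 := by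
        intro h; apply hx1; linarith
      have h1qx : (1 : ℚ) - q * x ≠ 0 := by
        intro h
        apply hxq
        field_simp
        linarith
      have hD : D.eval x = (q : ℚ) ^ g' * x ^ (2 * g') * D.eval (1 / (q * x)) :=
        mul_left_cancel₀ (mul_ne_zero h1x h1qx) (main x hx0)
      have hrev := rev_eval_aux D ((q : ℚ) * x) hqx
      simp only [Set.mem_setOf_eq, hL, hR, eval_mul, eval_pow, eval_comp, eval_C, eval_X]
      rw [hD, hrev]
      have hqxn : ((q : ℚ) * x) ^ n ≠ 0 := pow_ne_zero _ hqx
      field_simp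
      rw [← hn]
      ring
    intro t ht
    have hqt : (q : ℚ) * t ≠ 0 := mul_ne_zero hq0 ht
    have hev := congrArg (Polynomial.eval t) hLR
    simp only [hL, hR, eval_mul, eval_pow, eval_comp, eval_C, eval_X] at hev
    have hrev := rev_eval_aux D ((q : ℚ) * t) hqt
    rw [← hn] at hrev
    rw [hrev]
    have hqtn : ((q : ℚ) * t) ^ n ≠ 0 := pow_ne_zero _ hqt
    field_simp
    linear_combination hev
  · intro hDf t ht
    rw [key t ht, ← hDf t ht, hP t]
end

section
/- Let q ≥ 2 be an integer and c_0, c_1 ∈ ℚ with c_0 > 0, and set P(t) := (1−t)(1−qt)·(q c_0 t² + c_1 t + c_0) + t² ∈ ℚ[t]. Then every complex root of P has absolute value 1/√q if and only if the following three conditions hold: (1) ((q+1)·c_0 + c_1)² ≥ 4·c_0; (2) q − 4√q + 1 ≤ c_1/c_0 ≤ q + 4√q + 1; (3) c_1 ≤ min( 1/(√q − 1)² − 2√q·c_0 , 1/(√q + 1)² + 2√q·c_0 ). -/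
set_option maxHeartbeats 1000000

open Polynomial Complex

noncomputable def csqrt (w : ℂ) : ℂ := w ^ (((2:ℕ):ℂ)⁻¹)

lemma csqrt_sq (w : ℂ) : csqrt w ^ 2 = w := by
  have := Complex.cpow_nat_inv_pow w (two_ne_zero)
  simpa [csqrt] using this

lemma abs_eq_inv_sqrt {Q : ℝ} (hQ : 0 < Q) (z : ℂ) :
    ‖z‖ = 1/Real.sqrt Q ↔ Complex.normSq z = 1/Q := by
  rw [Complex.norm_def]
  constructor
  · intro h
    have := congrArg (·^2) h
    change (Real.sqrt (Complex.normSq z))^2 = (1/Real.sqrt Q)^2 at this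
    rw [Real.sq_sqrt (normSq_nonneg z)] at this
    rw [this, div_pow, one_pow, Real.sq_sqrt hQ.le]
  · intro h
    rw [h, one_div, Real.sqrt_inv, one_div]

lemma quad_roots_abs {Q : ℝ} (hQ : 0 < Q) (p e : ℂ) (he : e^2 = p^2 - ((4/Q : ℝ):ℂ)) :
    (‖(-p+e)/2‖ = 1/Real.sqrt Q ∧ ‖(-p-e)/2‖ = 1/Real.sqrt Q)
    ↔ (p.im = 0 ∧ p.re^2 ≤ 4/Q) := by
  rw [abs_eq_inv_sqrt hQ, abs_eq_inv_sqrt hQ]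
  have hre : e.re^2 - e.im^2 = p.re^2 - p.im^2 - 4/Q := by
    have := congrArg Complex.re he
    simpa [pow_two, Complex.mul_re] using this
  have him : e.re*e.im = p.re*p.im := by
    have := congrArg Complex.im he
    simp [pow_two, Complex.mul_im] at this
    linarith
  have h1 : Complex.normSq ((-p+e)/2) = ((e.re-p.re)^2+(e.im-p.im)^2)/4 := by
    simp [Complex.normSq_apply, Complex.div_re, Complex.div_im, Complex.normSq]
    ring
  have h2 : Complex.normSq ((-p-e)/2) = ((e.re+p.re)^2+(e.im+p.im)^2)/4 := by
    simp [Complex.normSq_apply, Complex.div_re, Complex.div_im, Complex.normSq]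
    ring
  rw [h1, h2]
  set a := p.re with hadef; set b := p.im with hbdef; set x := e.re with hxdef; set y := e.im with hydef
  clear_value a b x y
  clear he h1 h2
  constructor
  · rintro ⟨hA, hB⟩
    have hA' : x^2 - 2*x*a + a^2 + y^2 - 2*y*b + b^2 = 4*(1/Q) := by linear_combination 4*hA
    have hB' : x^2 + 2*x*a + a^2 + y^2 + 2*y*b + b^2 = 4*(1/Q) := by linear_combination 4*hB
    have h4 : 4/Q = 4*(1/Q) := by ring
    have hx2 : x^2 + b^2 = 0 := by linarith
    have hx : x = 0 := by nlinarith [sq_nonneg x, sq_nonneg b]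
    have hb : b = 0 := by nlinarith [sq_nonneg x, sq_nonneg b]
    refine ⟨hb, ?_⟩
    nlinarith [sq_nonneg y]
  · rintro ⟨hb, ha⟩
    have him0 : x * y = 0 := by rw [him, hb]; ring
    have hx : x = 0 := by
      rcases mul_eq_zero.1 him0 with hx | hy
      · exact hx
      · nlinarith [sq_nonneg x]
    constructor
    · linear_combination (-(1:ℝ)/4)*hre + ((x-a)/2)*hx + ((b-y)/2)*hb
    · linear_combination (-(1:ℝ)/4)*hre + ((x+a)/2)*hx + ((b+y)/2)*hb

lemma step1 (Q c0 c1 Sc Prc d : ℂ) (hQ : Q ≠ 0)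
    (hS : Q*c0*Sc = c1 - (Q+1)*c0) (hPr : Q^2*c0*Prc = 1 - (Q+1)*c1)
    (hd : d^2 = Sc^2 - 4*Prc) (z : ℂ) :
    (1 - z)*(1 - Q*z)*(Q*c0*z^2 + c1*z + c0) + z^2
      = (Q^2*c0) * ((z^2 + ((Sc+d)/2)*z + Q⁻¹) * (z^2 + ((Sc-d)/2)*z + Q⁻¹)) := by
  have hiv : Q*Q⁻¹ = 1 := mul_inv_cancel₀ hQ
  linear_combination (-(Q*z^3+z))*hS + (-(z^2))*hPr + (Q^2*c0*z^2/4)*hd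
    + (-(2*Q*c0*z^2 + Q*c0*Sc*z + c0*(Q*Q⁻¹+1)))*hiv

lemma step2 (Q p e z : ℂ) (he : e^2 = p^2 - 4/Q) :
    z^2 + p*z + Q⁻¹ = (z - (-p+e)/2) * (z - (-p-e)/2) := by
  linear_combination ((1:ℂ)/4)*he

lemma abs_le_of_sq_le {a b : ℝ} (hb : 0 < b) (h : a^2 ≤ b^2) : -b ≤ a ∧ a ≤ b := by
  constructor <;> nlinarith

lemma sq_le_of_abs_le {a b : ℝ} (h1 : -b ≤ a) (h2 : a ≤ b) : a^2 ≤ b^2 := by nlinarith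

lemma real_equiv (Q s c0 c1 Sr u v : ℝ) (hQ2 : 2 ≤ Q) (hs : s^2 = Q) (hs0 : 0 < s)
    (hc0 : 0 < c0)
    (hSr : Q*c0*Sr = c1 - (Q+1)*c0)
    (huv : u * v = 0)
    (hΔ : (Q*c0)^2 * (u^2 - v^2) = ((Q+1)*c0+c1)^2 - 4*c0) :
    ((v = 0 ∧ ((Sr+u)/2)^2 ≤ 4/Q) ∧ (v = 0 ∧ ((Sr-u)/2)^2 ≤ 4/Q)) ↔
      (4*c0 ≤ ((Q+1)*c0+c1)^2 ∧
        ((Q - 4*s + 1)*c0 ≤ c1 ∧ c1 ≤ (Q + 4*s + 1)*c0) ∧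
        ((s-1)^2*(c1 + 2*s*c0) ≤ 1 ∧ (s+1)^2*(c1 - 2*s*c0) ≤ 1)) := by
  subst hs
  have hs1 : 1 < s := by nlinarith
  have hQ0 : 0 < s^2 := by positivity
  have hconv : ∀ w : ℝ, (w^2 ≤ 4/s^2 ↔ (s^2*c0*w)^2 ≤ (2*s*c0)^2) := by
    intro w
    rw [le_div_iff₀ hQ0]
    constructor
    · intro h
      nlinarith [mul_nonneg (mul_nonneg hc0.le hc0.le) (by linarith : (0:ℝ) ≤ 4 - w^2*s^2), sq_nonneg (s*c0*w)]
    · intro h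
      nlinarith [mul_pos (mul_pos hc0 hc0) hQ0, sq_nonneg (s*c0*w)]
  rw [hconv, hconv]
  set X := s^2*c0*((Sr+u)/2) with hX
  set Y := s^2*c0*((Sr-u)/2) with hY
  have hA : X + Y = c1 - (s^2+1)*c0 := by rw [hX, hY]; linear_combination hSr
  have hU : X - Y = s^2*c0*u := by rw [hX, hY]; ring
  have hsc : 0 < 2*s*c0 := by positivity
  clear hconv
  constructor
  · rintro ⟨⟨hv, hx⟩, ⟨-, hy⟩⟩
    have hu2 : (s^2*c0)^2 * u^2 = ((s^2+1)*c0+c1)^2 - 4*c0 := by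
      linear_combination hΔ + ((s^2*c0)^2*v)*hv
    have hXY : X*Y = c0 - (s^2+1)*c0*c1 := by
      rw [hX, hY]
      linear_combination ((s^2*c0*Sr + c1 - (s^2+1)*c0)/4)*hSr + (-(1:ℝ)/4)*hu2
    clear_value X Y
    clear hSr hΔ huv hX hY hU
    obtain ⟨hXl, hXu⟩ := abs_le_of_sq_le hsc hx
    obtain ⟨hYl, hYu⟩ := abs_le_of_sq_le hsc hy
    refine ⟨by nlinarith [sq_nonneg (s^2*c0*u)], ⟨by linarith, by linarith⟩, ?_, ?_⟩
    · nlinarith [mul_nonneg (by linarith : (0:ℝ) ≤ 2*s*c0 + X) (by linarith : (0:ℝ) ≤ 2*s*c0 + Y), hc0]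
    · nlinarith [mul_nonneg (by linarith : (0:ℝ) ≤ 2*s*c0 - X) (by linarith : (0:ℝ) ≤ 2*s*c0 - Y), hc0]
  · rintro ⟨h1, ⟨h2a, h2b⟩, h3a, h3b⟩
    have hv : v = 0 := by
      rcases mul_eq_zero.1 huv with h | h
      · have hv2 : v^2 = 0 := by
          have h0 : u^2 = 0 := by rw [h]; ring
          nlinarith [sq_nonneg (s*c0*v), mul_pos (mul_pos hQ0 (mul_pos hc0 hc0)) hQ0]
        exact (pow_eq_zero_iff two_ne_zero).mp hv2
      · exact h
    have hu2 : (s^2*c0)^2 * u^2 = ((s^2+1)*c0+c1)^2 - 4*c0 := by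
      linear_combination hΔ + ((s^2*c0)^2*v)*hv
    have hXY : X*Y = c0 - (s^2+1)*c0*c1 := by
      rw [hX, hY]
      linear_combination ((s^2*c0*Sr + c1 - (s^2+1)*c0)/4)*hSr + (-(1:ℝ)/4)*hu2
    clear_value X Y
    clear hSr hΔ huv hX hY hU
    have hexpm : (2*s*c0 - X)*(2*s*c0 - Y)
        = 4*s^2*c0^2 - 2*s*c0*(c1 - (s^2+1)*c0) + (c0 - (s^2+1)*c0*c1) := by
      linear_combination (-(2*s*c0))*hA + hXY
    have hexpp : (2*s*c0 + X)*(2*s*c0 + Y)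
        = 4*s^2*c0^2 + 2*s*c0*(c1 - (s^2+1)*c0) + (c0 - (s^2+1)*c0*c1) := by
      linear_combination (2*s*c0)*hA + hXY
    have hprodm : 0 ≤ (2*s*c0 - X)*(2*s*c0 - Y) := by
      rw [hexpm]; linarith [mul_le_mul_of_nonneg_left h3b hc0.le]
    have hprodp : 0 ≤ (2*s*c0 + X)*(2*s*c0 + Y) := by
      rw [hexpp]; linarith [mul_le_mul_of_nonneg_left h3a hc0.le]
    have hsum1 : 0 ≤ (2*s*c0 - X) + (2*s*c0 - Y) := by linarith
    have hsum2 : 0 ≤ (2*s*c0 + X) + (2*s*c0 + Y) := by linarith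
    have hXu : X ≤ 2*s*c0 := by nlinarith [hprodm, hsum1]
    have hYu : Y ≤ 2*s*c0 := by nlinarith [hprodm, hsum1]
    have hXl : -(2*s*c0) ≤ X := by nlinarith [hprodp, hsum2]
    have hYl : -(2*s*c0) ≤ Y := by nlinarith [hprodp, hsum2]
    exact ⟨⟨hv, sq_le_of_abs_le hXl hXu⟩, hv, sq_le_of_abs_le hYl hYu⟩

/-- Let `q ≥ 2` be an integer and `c₀, c₁ ∈ ℚ` with `c₀ > 0`, and set
`P(t) := (1−t)(1−qt)·(q c₀ t² + c₁ t + c₀) + t²`.  Then every complex root of `P` has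
absolute value `1/√q` if and only if: (1) `((q+1)c₀ + c₁)² ≥ 4c₀`;
(2) `q − 4√q + 1 ≤ c₁/c₀ ≤ q + 4√q + 1`; and
(3) `c₁ ≤ min(1/(√q−1)² − 2√q c₀, 1/(√q+1)² + 2√q c₀)`. -/
theorem rha_for_genus_two (q : ℕ) (hq : 2 ≤ q) (c₀ c₁ : ℚ) (hc₀ : 0 < c₀) :
    (∀ z : ℂ,
        aeval z ((1 - X) * (1 - C (q : ℚ) * X) *
            (C ((q : ℚ) * c₀) * X ^ 2 + C c₁ * X + C c₀) + X ^ 2) = 0 →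
        ‖z‖ = 1 / Real.sqrt q) ↔
      ((((q : ℚ) + 1) * c₀ + c₁) ^ 2 ≥ 4 * c₀ ∧
        ((q : ℝ) - 4 * Real.sqrt q + 1 ≤ (c₁ : ℝ) / (c₀ : ℝ) ∧
          (c₁ : ℝ) / (c₀ : ℝ) ≤ (q : ℝ) + 4 * Real.sqrt q + 1) ∧
        (c₁ : ℝ) ≤ min (1 / (Real.sqrt q - 1) ^ 2 - 2 * Real.sqrt q * (c₀ : ℝ))
          (1 / (Real.sqrt q + 1) ^ 2 + 2 * Real.sqrt q * (c₀ : ℝ))) := by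
  have hc₀Q : c₀ ≠ 0 := ne_of_gt hc₀
  have hqQ0 : ((q:ℚ)) ≠ 0 := Nat.cast_ne_zero.2 (by omega)
  have hqC0 : ((q:ℂ)) ≠ 0 := Nat.cast_ne_zero.2 (by omega)
  have hQR : (0:ℝ) < (q:ℝ) := by exact_mod_cast Nat.pos_of_ne_zero (by omega)
  have hc₀R : (0:ℝ) < (c₀:ℝ) := by exact_mod_cast hc₀
  -- rational quantities
  set S : ℚ := (c₁ - ((q:ℚ)+1)*c₀)/((q:ℚ)*c₀) with hSdef
  set Pr : ℚ := (1 - ((q:ℚ)+1)*c₁)/((q:ℚ)^2*c₀) with hPrdef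
  have hSQ : (q:ℚ)*c₀*S = c₁ - ((q:ℚ)+1)*c₀ := by rw [hSdef]; field_simp
  have hPrQ : (q:ℚ)^2*c₀*Pr = 1 - ((q:ℚ)+1)*c₁ := by rw [hPrdef]; field_simp
  set Δ : ℚ := S^2 - 4*Pr with hΔdef
  have hΔQ : ((q:ℚ)*c₀)^2 * Δ = (((q:ℚ)+1)*c₀+c₁)^2 - 4*c₀ := by
    rw [hΔdef]
    linear_combination ((q:ℚ)*c₀*S + c₁ - ((q:ℚ)+1)*c₀)*hSQ + (-(4:ℚ)*c₀)*hPrQ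
  -- complex quantities
  set Sc : ℂ := ((S:ℚ):ℂ) with hScdef
  set Prc : ℂ := ((Pr:ℚ):ℂ) with hPrcdef
  set d : ℂ := csqrt ((Δ:ℚ):ℂ) with hddef
  have hdsq : d^2 = ((Δ:ℚ):ℂ) := by rw [hddef]; exact csqrt_sq _
  have hd : d^2 = Sc^2 - 4*Prc := by
    rw [hdsq, hScdef, hPrcdef, hΔdef]; push_cast; ring
  set p : ℂ := (Sc + d)/2 with hpdef
  set r : ℂ := (Sc - d)/2 with hrdef
  set e₁ : ℂ := csqrt (p^2 - 4/(q:ℂ)) with he₁def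
  set e₂ : ℂ := csqrt (r^2 - 4/(q:ℂ)) with he₂def
  have he₁ : e₁^2 = p^2 - 4/(q:ℂ) := by rw [he₁def]; exact csqrt_sq _
  have he₂ : e₂^2 = r^2 - 4/(q:ℂ) := by rw [he₂def]; exact csqrt_sq _
  have hS : (q:ℂ)*(c₀:ℂ)*Sc = (c₁:ℂ) - ((q:ℂ)+1)*(c₀:ℂ) := by
    rw [hScdef]
    have := congrArg (fun x : ℚ => (x:ℂ)) hSQ
    push_cast at this
    convert this using 2 <;> push_cast <;> ring
  have hPr : (q:ℂ)^2*(c₀:ℂ)*Prc = 1 - ((q:ℂ)+1)*(c₁:ℂ) := by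
    rw [hPrcdef]
    have := congrArg (fun x : ℚ => (x:ℂ)) hPrQ
    push_cast at this
    convert this using 2 <;> push_cast <;> ring
  -- factorization
  have hfact : ∀ z : ℂ,
      aeval z ((1 - X) * (1 - C (q : ℚ) * X) *
          (C ((q : ℚ) * c₀) * X ^ 2 + C c₁ * X + C c₀) + X ^ 2)
      = (q:ℂ)^2*(c₀:ℂ) *
        ((z - (-p+e₁)/2) * (z - (-p-e₁)/2) * ((z - (-r+e₂)/2) * (z - (-r-e₂)/2))) := by
    intro z
    have h1 := step1 (q:ℂ) (c₀:ℂ) (c₁:ℂ) Sc Prc d hqC0 hS hPr hd z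
    rw [← hpdef, ← hrdef] at h1
    rw [step2 (q:ℂ) p e₁ z he₁, step2 (q:ℂ) r e₂ z he₂] at h1
    simp only [map_add, map_mul, map_sub, map_one, map_pow, aeval_X, aeval_C, eq_ratCast]
    push_cast
    linear_combination h1
  have hK : (q:ℂ)^2*(c₀:ℂ) ≠ 0 := by
    refine mul_ne_zero (pow_ne_zero 2 hqC0) ?_
    exact_mod_cast hc₀Q
  have hroots : (∀ z : ℂ,
        aeval z ((1 - X) * (1 - C (q : ℚ) * X) *
            (C ((q : ℚ) * c₀) * X ^ 2 + C c₁ * X + C c₀) + X ^ 2) = 0 →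
        ‖z‖ = 1 / Real.sqrt q) ↔
      ((‖(-p+e₁)/2‖ = 1/Real.sqrt q ∧ ‖(-p-e₁)/2‖ = 1/Real.sqrt q) ∧
       (‖(-r+e₂)/2‖ = 1/Real.sqrt q ∧ ‖(-r-e₂)/2‖ = 1/Real.sqrt q)) := by
    constructor
    · intro h
      exact ⟨⟨h _ (by rw [hfact]; ring), h _ (by rw [hfact]; ring)⟩,
             h _ (by rw [hfact]; ring), h _ (by rw [hfact]; ring)⟩
    · rintro ⟨⟨h1, h2⟩, h3, h4⟩ z hz
      rw [hfact z] at hz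
      rcases mul_eq_zero.mp hz with h | h
      · exact absurd h hK
      rcases mul_eq_zero.mp h with h | h
      · rcases mul_eq_zero.mp h with h | h
        · rw [sub_eq_zero] at h; rw [h]; exact h1
        · rw [sub_eq_zero] at h; rw [h]; exact h2
      · rcases mul_eq_zero.mp h with h | h
        · rw [sub_eq_zero] at h; rw [h]; exact h3
        · rw [sub_eq_zero] at h; rw [h]; exact h4
  have hq4 : ((4/(q:ℝ) : ℝ) : ℂ) = 4/(q:ℂ) := by push_cast; ring
  have quad1 := quad_roots_abs hQR p e₁ (by rw [hq4]; exact he₁)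
  have quad2 := quad_roots_abs hQR r e₂ (by rw [hq4]; exact he₂)
  -- components
  have h2p : (2:ℂ)*p = Sc + d := by rw [hpdef]; ring
  have h2r : (2:ℂ)*r = Sc - d := by rw [hrdef]; ring
  have hScim : Sc.im = 0 := by rw [hScdef]; simp
  have hScre : Sc.re = ((S:ℚ):ℝ) := by rw [hScdef]; simp
  have hpim : p.im = 0 ↔ d.im = 0 := by
    have := congrArg Complex.im h2p
    simp [Complex.mul_im, Complex.add_im, hScim] at this
    constructor <;> intro h <;> [skip; skip] <;> linarith [this]
  have hrim : r.im = 0 ↔ d.im = 0 := by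
    have := congrArg Complex.im h2r
    simp [Complex.mul_im, Complex.sub_im, hScim] at this
    constructor <;> intro h <;> linarith [this]
  have hpre : p.re = (((S:ℚ):ℝ) + d.re)/2 := by
    have := congrArg Complex.re h2p
    simp [Complex.mul_re, Complex.add_re, hScre] at this
    linarith [this]
  have hrre : r.re = (((S:ℚ):ℝ) - d.re)/2 := by
    have := congrArg Complex.re h2r
    simp [Complex.mul_re, Complex.sub_re, hScre] at this
    linarith [this]
  have hduv : d.re * d.im = 0 := by
    have := congrArg Complex.im hdsq
    simp [pow_two, Complex.mul_im] at this
    linarith [this]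
  have hdre : d.re^2 - d.im^2 = ((Δ:ℚ):ℝ) := by
    have := congrArg Complex.re hdsq
    simp [pow_two, Complex.mul_re] at this
    linear_combination this
  -- real side
  have hSrR : (q:ℝ)*(c₀:ℝ)*((S:ℚ):ℝ) = (c₁:ℝ) - ((q:ℝ)+1)*(c₀:ℝ) := by
    have := congrArg (fun x : ℚ => (x:ℝ)) hSQ
    push_cast at this
    linear_combination this
  have hΔR : ((q:ℝ)*(c₀:ℝ))^2 * (d.re^2 - d.im^2) = (((q:ℝ)+1)*(c₀:ℝ)+(c₁:ℝ))^2 - 4*(c₀:ℝ) := by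
    have hc := congrArg (fun x : ℚ => (x:ℝ)) hΔQ
    push_cast at hc
    rw [hdre]
    linear_combination hc
  have hs2 : (Real.sqrt q)^2 = (q:ℝ) := Real.sq_sqrt hQR.le
  have hs0 : 0 < Real.sqrt q := Real.sqrt_pos.2 hQR
  have hqR2 : (2:ℝ) ≤ (q:ℝ) := by exact_mod_cast hq
  have hs1 : 1 < Real.sqrt q := by nlinarith
  have hmain := real_equiv (q:ℝ) (Real.sqrt q) (c₀:ℝ) (c₁:ℝ) ((S:ℚ):ℝ) d.re d.im
    hqR2 hs2 hs0 hc₀R hSrR hduv hΔR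
  rw [hroots, quad1, quad2, hpim, hrim, hpre, hrre, hmain]
  have hsm1 : (0:ℝ) < (Real.sqrt q - 1)^2 := by nlinarith [hs1]
  have hsp1 : (0:ℝ) < (Real.sqrt q + 1)^2 := by positivity
  constructor
  · rintro ⟨h1, ⟨h2a, h2b⟩, h3a, h3b⟩
    refine ⟨?_, ⟨?_, ?_⟩, ?_⟩
    · rw [ge_iff_le]; exact_mod_cast h1
    · rw [le_div_iff₀ hc₀R]; linarith
    · rw [div_le_iff₀ hc₀R]; linarith
    · rw [le_min_iff]
      constructor
      · have h : (c₁:ℝ) + 2*Real.sqrt q*(c₀:ℝ) ≤ 1/(Real.sqrt q - 1)^2 := by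
          rw [le_div_iff₀ hsm1]; nlinarith [h3a]
        linarith
      · have h : (c₁:ℝ) - 2*Real.sqrt q*(c₀:ℝ) ≤ 1/(Real.sqrt q + 1)^2 := by
          rw [le_div_iff₀ hsp1]; nlinarith [h3b]
        linarith
  · rintro ⟨h1, ⟨h2a, h2b⟩, h3⟩
    rw [le_min_iff] at h3
    rw [le_div_iff₀ hc₀R] at h2a
    rw [div_le_iff₀ hc₀R] at h2b
    refine ⟨by exact_mod_cast h1, ⟨by linarith, by linarith⟩, ?_, ?_⟩
    · have h' : (c₁:ℝ) + 2*Real.sqrt q*(c₀:ℝ) ≤ 1/(Real.sqrt q - 1)^2 := by linarith [h3.1]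
      rw [le_div_iff₀ hsm1] at h'
      nlinarith [h']
    · have h' : (c₁:ℝ) - 2*Real.sqrt q*(c₀:ℝ) ≤ 1/(Real.sqrt q + 1)^2 := by linarith [h3.2]
      rw [le_div_iff₀ hsp1] at h'
      nlinarith [h']
end

section
/- Let q ≥ 2 and g ≥ 1 be integers and L ∈ ℚ[t] a polynomial of degree 2g. Then L(t) = q^{g} t^{2g} L(1/(qt)) holds for all nonzero t if and only if (1−t)(1−qt) divides L(t) − L(1)·t^{g} in ℚ[t] and the quotient L'(t) := (L(t) − L(1)·t^{g}) / ((1−t)(1−qt)) is a polynomial of degree 2g−2 satisfying L'(t) = q^{g−1} t^{2g−2} L'(1/(qt)) for all nonzero t. -/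
open Polynomial

noncomputable def reflAux (qq c : ℚ) (n : ℕ) (P : ℚ[X]) : ℚ[X] :=
  ∑ i ∈ Finset.range (n + 1), C (P.coeff i * c / qq ^ i) * X ^ (n - i)

private lemma eval_reflAux (qq c : ℚ) (hqq : qq ≠ 0) (n : ℕ) (P : ℚ[X])
    (hP : P.natDegree ≤ n) (t : ℚ) (ht : t ≠ 0) :
    (reflAux qq c n P).eval t = c * t ^ n * P.eval (1 / (qq * t)) := by
  rw [Polynomial.eval_eq_sum_range' (Nat.lt_succ_of_le hP) (1 / (qq * t)), Finset.mul_sum]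
  simp only [reflAux, eval_finset_sum, eval_mul, eval_pow, eval_C, eval_X]
  apply Finset.sum_congr rfl
  intro i hi
  have hi' : i ≤ n := Nat.lt_succ_iff.mp (Finset.mem_range.mp hi)
  have hpow : t ^ n = t ^ (n - i) * t ^ i := by rw [← pow_add, Nat.sub_add_cancel hi']
  rw [hpow]
  field_simp
  have h1 : qq ^ i * qq⁻¹ ^ i = 1 := by rw [← mul_pow, mul_inv_cancel₀ hqq, one_pow]
  have h2 : t ^ i * t⁻¹ ^ i = 1 := by rw [← mul_pow, mul_inv_cancel₀ ht, one_pow]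
  linear_combination (-(P.coeff i * c) * (t ^ i * t⁻¹ ^ i)) * h1 - (P.coeff i * c) * h2

/-- Let `q ≥ 2` and `g ≥ 1` be integers and `L ∈ ℚ[t]` of degree `2g`.  Then
`L(t) = q^g t^{2g} L(1/(qt))` for all nonzero `t` if and only if `(1−t)(1−qt)` divides
`L(t) − L(1)·t^g` in `ℚ[t]` and the quotient `L'` is a polynomial of degree `2g−2`
satisfying `L'(t) = q^{g−1} t^{2g−2} L'(1/(qt))` for all nonzero `t`. -/
theorem functional_equation_iff_reduced (q g : ℕ) (hq : 2 ≤ q) (hg : 1 ≤ g)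
    (L : ℚ[X]) (hdeg : L.natDegree = 2 * g) :
    (∀ t : ℚ, t ≠ 0 →
        L.eval t = (q : ℚ) ^ g * t ^ (2 * g) * L.eval (1 / (q * t))) ↔
      ((1 - X) * (1 - C (q : ℚ) * X) ∣ L - C (L.eval 1) * X ^ g ∧
        ((L - C (L.eval 1) * X ^ g) / ((1 - X) * (1 - C (q : ℚ) * X))).natDegree =
          2 * g - 2 ∧
        ∀ t : ℚ, t ≠ 0 →
          ((L - C (L.eval 1) * X ^ g) / ((1 - X) * (1 - C (q : ℚ) * X))).eval t =
            (q : ℚ) ^ (g - 1) * t ^ (2 * g - 2) *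
              ((L - C (L.eval 1) * X ^ g) / ((1 - X) * (1 - C (q : ℚ) * X))).eval
                (1 / (q * t))) := by
  have hq0 : (q : ℚ) ≠ 0 := Nat.cast_ne_zero.mpr (by omega)
  set D : ℚ[X] := (1 - X) * (1 - C (q : ℚ) * X) with hDdef
  set M : ℚ[X] := L - C (L.eval 1) * X ^ g with hMdef
  set L' : ℚ[X] := M / D with hL'def
  have hDeval : ∀ t : ℚ, D.eval t = (1 - t) * (1 - q * t) := by
    intro t; simp [hDdef]
  have hD0 : D ≠ 0 := by
    intro hcon
    have h0 := congrArg (eval 0) hcon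
    rw [hDeval 0] at h0
    simp at h0
  have hDdeg : D.natDegree = 2 := by
    rw [hDdef]
    compute_degree!
    omega
  have hMdeg : M.natDegree = 2 * g := by
    have h1 : (C (L.eval 1) * X ^ g).natDegree < L.natDegree := by
      apply lt_of_le_of_lt (natDegree_C_mul_le _ _)
      rw [natDegree_X_pow, hdeg]
      omega
    rw [hMdef, natDegree_sub_eq_left_of_natDegree_lt h1, hdeg]
  have hM0 : M ≠ 0 := by
    intro hcon
    rw [hcon, natDegree_zero] at hMdeg
    omega
  have hDid : ∀ t : ℚ, t ≠ 0 → D.eval t = q * t ^ 2 * D.eval (1 / (q * t)) := by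
    intro t ht
    rw [hDeval, hDeval]
    field_simp
    ring
  have eg : (q : ℚ) ^ g = q * q ^ (g - 1) := by
    conv_lhs => rw [show g = (g - 1) + 1 by omega]
    rw [pow_succ']
  have et : ∀ t : ℚ, t ^ (2 * g) = t ^ 2 * t ^ (2 * g - 2) := by
    intro t
    rw [← pow_add]
    congr 1
    omega
  have hsg : ∀ t : ℚ, t ≠ 0 → (q : ℚ) ^ g * t ^ (2 * g) * (1 / (q * t)) ^ g = t ^ g := by
    intro t ht
    rw [div_pow, one_pow, mul_pow, show 2 * g = g + g by ring, pow_add]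
    field_simp
  constructor
  · intro h
    have hroot1 : M.IsRoot 1 := by simp [hMdef, IsRoot]
    have hrootq : M.IsRoot ((q : ℚ)⁻¹) := by
      have h1 : L.eval 1 = (q : ℚ) ^ g * L.eval ((q : ℚ)⁻¹) := by
        simpa using h 1 one_ne_zero
      simp only [IsRoot, hMdef, eval_sub, eval_mul, eval_C, eval_pow, eval_X, h1]
      field_simp
      rw [one_div, inv_pow, mul_inv_cancel₀ (pow_ne_zero _ hq0)]
      ring
    have hcop : IsCoprime (X - C (1 : ℚ)) (X - C ((q : ℚ)⁻¹)) := by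
      apply isCoprime_X_sub_C_of_isUnit_sub
      have : (1 : ℚ) - (q : ℚ)⁻¹ ≠ 0 := by
        have h2 : (2 : ℚ) ≤ (q : ℚ) := by exact_mod_cast hq
        have : (q : ℚ)⁻¹ < 1 := by
          rw [inv_lt_one_iff₀]
          right; linarith
        intro hcon
        rw [sub_eq_zero] at hcon
        rw [← hcon] at this
        exact lt_irrefl _ this
      exact isUnit_iff_ne_zero.mpr this
    have hdvd2 : (X - C (1 : ℚ)) * (X - C ((q : ℚ)⁻¹)) ∣ M :=
      hcop.mul_dvd ((dvd_iff_isRoot).mpr (by simpa using hroot1))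
        ((dvd_iff_isRoot).mpr hrootq)
    have hqq : C ((q : ℚ)) * C ((q : ℚ)⁻¹) = 1 := by
      rw [← C_mul, mul_inv_cancel₀ hq0, C_1]
    have hDfact : D = C ((q : ℚ)) * ((X - C (1 : ℚ)) * (X - C ((q : ℚ)⁻¹))) := by
      rw [hDdef]
      simp only [C_1]
      linear_combination (X - 1 : ℚ[X]) * hqq
    have hdvd : D ∣ M := by
      obtain ⟨N, hN⟩ := hdvd2
      refine ⟨C ((q : ℚ)⁻¹) * N, ?_⟩
      rw [hN, hDfact]
      simp only [C_1]
      linear_combination (-((X - 1) * (X - C ((q:ℚ)⁻¹)) * N)) * hqq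
    have hML : M = D * L' := (EuclideanDomain.mul_div_cancel' hD0 hdvd).symm
    have hL'0 : L' ≠ 0 := by
      intro hcon
      rw [hcon, mul_zero] at hML
      exact hM0 hML
    have hdegL' : L'.natDegree = 2 * g - 2 := by
      have hnm := natDegree_mul hD0 hL'0
      rw [← hML, hMdeg, hDdeg] at hnm
      omega
    refine ⟨hdvd, hdegL', ?_⟩
    have hdegle : L'.natDegree ≤ 2 * g - 2 := le_of_eq hdegL'
    have key : L' = reflAux q ((q : ℚ) ^ (g - 1)) (2 * g - 2) L' := by
      apply eq_of_infinite_eval_eq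
      apply Set.Infinite.mono (s := ({0, 1, (q : ℚ)⁻¹} : Set ℚ)ᶜ)
      swap
      · exact Set.Finite.infinite_compl (Set.toFinite _)
      intro t ht
      simp only [Set.mem_compl_iff, Set.mem_insert_iff, Set.mem_singleton_iff, not_or] at ht
      obtain ⟨ht0, ht1, htq⟩ := ht
      show eval t L' = eval t (reflAux _ _ _ _)
      rw [eval_reflAux _ _ hq0 _ _ hdegle t ht0]
      have hs0 : (1 / ((q : ℚ) * t)) ≠ 0 := one_div_ne_zero (mul_ne_zero hq0 ht0)
      have hDt : D.eval t ≠ 0 := by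
        rw [hDeval]
        exact mul_ne_zero (sub_ne_zero.mpr (Ne.symm ht1))
          (sub_ne_zero.mpr (by
            intro hcon
            apply htq
            field_simp
            linear_combination -hcon))
      have hDs : D.eval (1 / ((q : ℚ) * t)) ≠ 0 := by
        intro hcon
        rw [hDid t ht0, hcon, mul_zero] at hDt
        exact hDt rfl
      have hMfe : M.eval t = (q : ℚ) ^ g * t ^ (2 * g) * M.eval (1 / (q * t)) := by
        simp only [hMdef, eval_sub, eval_mul, eval_C, eval_pow, eval_X]
        rw [h t ht0]
        linear_combination (L.eval 1) * hsg t ht0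
      have e1 : M.eval t = D.eval t * L'.eval t := by rw [hML, eval_mul]
      have e2 : M.eval (1 / ((q : ℚ) * t)) = D.eval (1 / ((q : ℚ) * t)) * L'.eval (1 / ((q : ℚ) * t)) := by
        rw [hML, eval_mul]
      apply mul_left_cancel₀ hDt
      rw [← e1, hMfe, e2, hDid t ht0, eg, et t]
      ring
    intro t ht
    conv_lhs => rw [key]
    rw [eval_reflAux _ _ hq0 _ _ hdegle t ht]
  · rintro ⟨hdvd, -, hFE'⟩ t ht
    have hML : M = D * L' := (EuclideanDomain.mul_div_cancel' hD0 hdvd).symm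
    have hs0 : (1 / ((q : ℚ) * t)) ≠ 0 := one_div_ne_zero (mul_ne_zero hq0 ht)
    have e1 : M.eval t = D.eval t * L'.eval t := by rw [hML, eval_mul]
    have e2 : M.eval (1 / ((q : ℚ) * t)) = D.eval (1 / ((q : ℚ) * t)) * L'.eval (1 / ((q : ℚ) * t)) := by
      rw [hML, eval_mul]
    have hMe : ∀ u : ℚ, M.eval u = L.eval u - L.eval 1 * u ^ g := by
      intro u; simp [hMdef]
    have hfe := hFE' t ht
    calc L.eval t = M.eval t + L.eval 1 * t ^ g := by rw [hMe]; ring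
      _ = D.eval t * L'.eval t + L.eval 1 * t ^ g := by rw [e1]
      _ = ((q : ℚ) * t ^ 2 * D.eval (1 / (q * t))) *
            ((q : ℚ) ^ (g - 1) * t ^ (2 * g - 2) * L'.eval (1 / (q * t))) +
            L.eval 1 * t ^ g := by rw [← hDid t ht, ← hfe]
      _ = (q : ℚ) ^ g * t ^ (2 * g) * (D.eval (1 / (q * t)) * L'.eval (1 / (q * t))) +
            L.eval 1 * t ^ g := by rw [eg, et t]; ring
      _ = (q : ℚ) ^ g * t ^ (2 * g) * (M.eval (1 / (q * t)) + L.eval 1 * (1 / (q * t)) ^ g) := by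
            rw [e2]; linear_combination (-(L.eval 1)) * hsg t ht
      _ = (q : ℚ) ^ g * t ^ (2 * g) * L.eval (1 / (q * t)) := by rw [hMe]; ring
end

section
/- Let q ≥ 2 and g ≥ 1 be integers and L ∈ ℚ[t] a polynomial of degree 2g. Then L(t) = q^{g} t^{2g} L(1/(qt)) holds for all nonzero t if and only if there exist rational numbers h_0, h_1, …, h_g such that L(t) = Σ_{i=0}^{g} h_i·t^{i}·(1−t)^{g−i}·(1−qt)^{g−i}. -/
open Polynomial

lemma fe_bridge (q : ℚ) (g : ℕ) (hq0 : q ≠ 0) (N : ℚ[X]) (hdeg : N.natDegree ≤ 2*g)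
    (H : ∀ t : ℚ, t ≠ 0 → N.eval t = q^g * t^(2*g) * N.eval (1/(q*t))) :
    ∀ k ≤ 2*g, N.coeff (2*g - k) * q^k = N.coeff k * q^g := by
  set M : ℚ[X] := ∑ j ∈ Finset.range (2*g+1), C (N.coeff j * q^g / q^j) * X^(2*g - j) with hMdef
  have hM : ∀ t : ℚ, t ≠ 0 → M.eval t = q^g * t^(2*g) * N.eval (1/(q*t)) := by
    intro t ht
    have hNe : N.eval (1/(q*t)) = ∑ j ∈ Finset.range (2*g+1), N.coeff j * (1/(q*t))^j := by
      exact eval_eq_sum_range' (by omega) _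
    rw [hMdef, eval_finset_sum, hNe, Finset.mul_sum]
    apply Finset.sum_congr rfl
    intro j hj
    simp only [Finset.mem_range] at hj
    have hj' : j ≤ 2*g := by omega
    rw [eval_mul, eval_C, eval_pow, eval_X, pow_sub₀ t ht hj']
    field_simp
    have e1 : q^j * q⁻¹^j = 1 := by rw [← mul_pow, mul_inv_cancel₀ hq0, one_pow]
    have e2 : t^j * t⁻¹^j = 1 := by rw [← mul_pow, mul_inv_cancel₀ ht, one_pow]
    linear_combination (-(N.coeff j) * t^j * t⁻¹^j) * e1 - N.coeff j * e2
  have hNM : N = M := by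
    apply eq_of_infinite_eval_eq
    apply Set.Infinite.mono (s := {t : ℚ | t ≠ 0})
    · intro t ht
      simp only [Set.mem_setOf_eq] at ht ⊢
      rw [H t ht, hM t ht]
    · have hfin : ({0} : Set ℚ).Finite := Set.finite_singleton 0
      have := hfin.infinite_compl
      convert this using 1
      ext t; simp
  intro k hk
  have hco : N.coeff (2*g - k) = N.coeff k * q^g / q^k := by
    conv_lhs => rw [hNM]
    rw [hMdef, finset_sum_coeff, Finset.sum_eq_single k]
    · simp [coeff_C_mul, coeff_X_pow]
    · intro j hj hjk
      simp only [Finset.mem_range] at hj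
      simp only [coeff_C_mul, coeff_X_pow, if_neg (show ¬(2*g - k = 2*g - j) by omega), mul_zero]
    · intro hcon; exact absurd (Finset.mem_range.mpr (by omega)) hcon
  rw [hco]
  field_simp

lemma pow_eval_fe (q : ℚ) (hq0 : q ≠ 0) (m : ℕ) (t : ℚ) (ht : t ≠ 0) :
    (((1-X)*(1-C q*X))^m).eval t
      = q^m * t^(2*m) * (((1-X)*(1-C q*X))^m).eval (1/(q*t)) := by
  have key : (1-t)*(1-q*t) = q*t^2*((1 - 1/(q*t))*(1 - q*(1/(q*t)))) := by
    field_simp; ring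
  simp only [eval_pow, eval_mul, eval_sub, eval_one, eval_C, eval_X]
  rw [pow_mul t 2 m, ← mul_pow, ← mul_pow, key]

lemma pow_natDegree_le (q : ℚ) (m : ℕ) : (((1-X)*(1-C q*X))^m).natDegree ≤ 2*m := by
  apply le_trans (natDegree_pow_le)
  have h1 : (1 - X : ℚ[X]).natDegree ≤ 1 := by
    apply le_trans (natDegree_sub_le _ _); simp
  have h2 : (1 - C q * X : ℚ[X]).natDegree ≤ 1 := by
    apply le_trans (natDegree_sub_le _ _)
    simp [natDegree_C_mul_le]
    exact natDegree_C_mul_le q X |>.trans (by simp)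
  calc m * ((1-X)*(1-C q*X) : ℚ[X]).natDegree
      ≤ m * ((1-X:ℚ[X]).natDegree + (1-C q*X:ℚ[X]).natDegree) := by
        exact Nat.mul_le_mul_left m (natDegree_mul_le)
    _ ≤ m * 2 := by exact Nat.mul_le_mul_left m (by omega)
    _ = 2*m := by ring

lemma pow_coeff_zero (q : ℚ) (m : ℕ) : (((1-X)*(1-C q*X))^m).coeff 0 = 1 := by
  rw [coeff_zero_eq_eval_zero]
  simp

lemma aux_decomp (q : ℚ) (hq0 : q ≠ 0) (h2 : ∀ (m : ℕ) (k : ℕ), k ≤ 2*m →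
      ((((1-X)*(1-C q*X))^m : ℚ[X]).coeff (2*m - k)) * q^k
        = ((((1-X)*(1-C q*X))^m : ℚ[X]).coeff k) * q^m) :
    ∀ (g : ℕ) (R : ℚ[X]), R.natDegree ≤ 2*g →
    (∀ k ≤ 2*g, R.coeff (2*g - k) * q^k = R.coeff k * q^g) →
    ∃ h : ℕ → ℚ, R = ∑ i ∈ Finset.range (g+1),
      C (h i) * X^i * ((1 - X) * (1 - C q * X))^(g - i) := by
  intro g
  induction g with
  | zero =>
    intro R hdeg _
    refine ⟨fun _ => R.coeff 0, ?_⟩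
    have := Polynomial.eq_C_of_natDegree_le_zero (by omega : R.natDegree ≤ 0)
    simpa using this
  | succ g IH =>
    intro R hdeg hsym
    set P : ℚ[X] := (1 - X) * (1 - C q * X) with hP
    set h0 : ℚ := R.coeff 0 with hh0
    set R' : ℚ[X] := R - C h0 * P^(g+1) with hR'
    have hB0sym := h2 (g+1)
    have hqg : (q:ℚ)^(g+1) ≠ 0 := pow_ne_zero _ hq0
    have hq2 : q^(2*(g+1)) = q^(g+1) * q^(g+1) := by
      rw [← pow_add]; congr 1; ring
    have hB0top : (P^(g+1)).coeff (2*(g+1)) = q^(g+1) := by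
      have h1 := hB0sym (2*(g+1)) le_rfl
      rw [Nat.sub_self, pow_coeff_zero, one_mul, hq2] at h1
      exact (mul_right_cancel₀ hqg h1).symm
    have hRtop : R.coeff (2*(g+1)) = h0 * q^(g+1) := by
      have h1 := hsym (2*(g+1)) le_rfl
      rw [Nat.sub_self, hq2, ← mul_assoc] at h1
      have h2' := mul_right_cancel₀ hqg h1
      rw [hh0]
      exact h2'.symm
    have hR'0 : R'.coeff 0 = 0 := by
      rw [hR', coeff_sub, coeff_C_mul, pow_coeff_zero]
      simp [hh0]
    have hR'top : R'.coeff (2*(g+1)) = 0 := by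
      rw [hR', coeff_sub, coeff_C_mul, hB0top, hRtop, sub_self]
    have hR'deg : ∀ m, 2*(g+1) < m → R'.coeff m = 0 := by
      intro m hm
      rw [hR', coeff_sub, coeff_eq_zero_of_natDegree_lt (by omega),
        coeff_C_mul, coeff_eq_zero_of_natDegree_lt (lt_of_le_of_lt (pow_natDegree_le q (g+1)) hm),
        mul_zero, sub_self]
    have hR'sym : ∀ k ≤ 2*(g+1), R'.coeff (2*(g+1) - k) * q^k = R'.coeff k * q^(g+1) := by
      intro k hk
      have e1 := hsym k hk
      have e2 := hB0sym k hk
      rw [hR']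
      simp only [coeff_sub, coeff_C_mul]
      linear_combination e1 - h0 * e2
    obtain ⟨S, hS⟩ := Polynomial.X_dvd_iff.mpr hR'0
    have hScoeff : ∀ n, S.coeff n = R'.coeff (n+1) := by
      intro n; rw [hS, coeff_X_mul]
    have hSdeg : S.natDegree ≤ 2*g := by
      rw [Polynomial.natDegree_le_iff_coeff_eq_zero]
      intro m hm
      rw [hScoeff]
      rcases Nat.lt_or_ge (2*(g+1)) (m+1) with h | h
      · exact hR'deg _ h
      · have : m + 1 = 2*(g+1) := by omega
        rw [this]; exact hR'top
    have hSsym : ∀ k ≤ 2*g, S.coeff (2*g - k) * q^k = S.coeff k * q^g := by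
      intro k hk
      have := hR'sym (k+1) (by omega)
      have hidx : 2*(g+1) - (k+1) = (2*g - k) + 1 := by omega
      rw [hidx, ← hScoeff, ← hScoeff] at this
      rw [pow_succ, pow_succ, ← mul_assoc, ← mul_assoc] at this
      exact mul_right_cancel₀ hq0 this
    obtain ⟨c, hc⟩ := IH S hSdeg hSsym
    refine ⟨fun i => if i = 0 then h0 else c (i-1), ?_⟩
    have hsum : ∑ i ∈ Finset.range (g+1+1),
        C (if i = 0 then h0 else c (i-1)) * X^i * P^(g+1-i)
        = (∑ i ∈ Finset.range (g+1), C (c i) * X^(i+1) * P^(g-i)) + C h0 * P^(g+1) := by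
      rw [Finset.sum_range_succ']
      congr 1
      · apply Finset.sum_congr rfl
        intro i _
        have : (i+1) - 1 = i := rfl
        simp only [Nat.succ_ne_zero, if_false, this, Nat.succ_sub_succ]
      · simp
    rw [hsum]
    have : ∑ i ∈ Finset.range (g+1), C (c i) * X^(i+1) * P^(g-i) = X * S := by
      rw [hc, Finset.mul_sum]
      apply Finset.sum_congr rfl
      intro i _
      rw [pow_succ]
      ring
    rw [this, ← hS, hR']
    ring

lemma term_id (q t c x y u v : ℚ) (i k : ℕ) (hx : x = q*t^2*u) (hy : y = q*t^2*v) :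
    c * x^i * y^k = q^(i+k) * t^(2*(i+k)) * (c * u^i * v^k) := by
  subst hx hy
  rw [pow_add, show 2*(i+k) = 2*i+2*k from by ring, pow_add, pow_mul, pow_mul,
    mul_pow, mul_pow, mul_pow, mul_pow]
  ring

/-- Let `q ≥ 2` and `g ≥ 1` be integers and `L ∈ ℚ[t]` of degree `2g`.  Then
`L(t) = q^g t^{2g} L(1/(qt))` for all nonzero `t` if and only if there exist rational
numbers `h_0, …, h_g` with `L(t) = Σ_{i=0}^{g} h_i·t^i·(1−t)^{g−i}·(1−qt)^{g−i}`. -/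
theorem functional_equation_iff_class_number_decomposition (q g : ℕ) (hq : 2 ≤ q)
    (hg : 1 ≤ g) (L : ℚ[X]) (hdeg : L.natDegree = 2 * g) :
    (∀ t : ℚ, t ≠ 0 →
        L.eval t = (q : ℚ) ^ g * t ^ (2 * g) * L.eval (1 / (q * t))) ↔
      ∃ h : ℕ → ℚ, ∀ t : ℚ,
        L.eval t = ∑ i ∈ Finset.range (g + 1),
          h i * t ^ i * (1 - t) ^ (g - i) * (1 - q * t) ^ (g - i) := by
  have hq0 : (q : ℚ) ≠ 0 := by
    have : (0:ℚ) < q := by exact_mod_cast (by omega : 0 < q)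
    exact ne_of_gt this
  constructor
  · intro H
    have h2 : ∀ (m : ℕ) (k : ℕ), k ≤ 2*m →
        ((((1-X)*(1-C (q:ℚ)*X))^m : ℚ[X]).coeff (2*m - k)) * (q:ℚ)^k
          = ((((1-X)*(1-C (q:ℚ)*X))^m : ℚ[X]).coeff k) * (q:ℚ)^m := by
      intro m k hk
      exact fe_bridge (q:ℚ) m hq0 _ (pow_natDegree_le (q:ℚ) m)
        (fun t ht => pow_eval_fe (q:ℚ) hq0 m t ht) k hk
    have hsymL := fe_bridge (q:ℚ) g hq0 L (le_of_eq hdeg) H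
    obtain ⟨h, hh⟩ := aux_decomp (q:ℚ) hq0 h2 g L (le_of_eq hdeg) hsymL
    refine ⟨h, fun t => ?_⟩
    rw [hh, eval_finset_sum]
    apply Finset.sum_congr rfl
    intro i _
    simp [mul_pow, mul_assoc]
  · rintro ⟨h, hh⟩ t ht
    rw [hh t, hh (1/((q:ℚ)*t)), Finset.mul_sum]
    apply Finset.sum_congr rfl
    intro i hi
    simp only [Finset.mem_range] at hi
    obtain ⟨k, hk⟩ : ∃ k, g = i + k := ⟨g - i, by omega⟩
    subst hk
    have hgi : i + k - i = k := by omega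
    rw [hgi]
    have key : (1-t)*(1-(q:ℚ)*t) = (q:ℚ)*t^2*((1 - 1/((q:ℚ)*t))*(1 - (q:ℚ)*(1/((q:ℚ)*t)))) := by
      field_simp; ring
    have keyt : t = (q:ℚ)*t^2*(1/((q:ℚ)*t)) := by
      field_simp
    rw [mul_assoc (h i * t^i), ← mul_pow,
      mul_assoc (h i * (1/((q:ℚ)*t))^i), ← mul_pow]
    exact term_id (q:ℚ) t (h i) t _ _ _ i k keyt key
end

section
/- Let q ≥ 2 and g ≥ 1 be integers, h an integer, and (A_j)_{j ≥ 0} a sequence of integers satisfying A_j = q^{j−g+1}·A_{2g−2−j} + h·(q^{j−g+1} − 1)/(q − 1) for all g ≤ j ≤ 2g−2, and A_j = h·(q^{j−g+1} − 1)/(q − 1) for all j ≥ 2g−1. Let L ∈ ℚ[t] be a polynomial such that the formal power series identity L(t)/((1−t)(1−qt)) = Σ_{j ≥ 0} A_j t^{j} holds. Then L(t) = (1−t)(1−qt)·D(t) + h·t^{g}, where D(t) = Σ_{i=0}^{g−2} A_i·(t^{i} + q^{g−1−i}·t^{2g−2−i}) + A_{g−1}·t^{g−1}; in particular D has integer coefficients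 and is uniquely determined by A_0, …, A_{g−1}. -/
open Polynomial PowerSeries

private theorem hwrp_Dcoeff (q g : ℕ) (hg : 1 ≤ g) (A : ℕ → ℤ) (n : ℕ) :
    (((∑ i ∈ Finset.range (g - 1), Polynomial.C (A i : ℚ) *
          (Polynomial.X ^ i +
            Polynomial.C ((q : ℚ) ^ (g - 1 - i)) * Polynomial.X ^ (2 * g - 2 - i))) +
          Polynomial.C (A (g - 1) : ℚ) * Polynomial.X ^ (g - 1)) : ℚ[X]).coeff n
      = (if n < g then (A n : ℚ)
        else if n ≤ 2 * g - 2 then (q : ℚ) ^ (n + 1 - g) * (A (2 * g - 2 - n) : ℚ) else 0) := by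
  simp only [Polynomial.coeff_add, Polynomial.finset_sum_coeff, Polynomial.coeff_C_mul,
    Polynomial.coeff_X_pow, mul_add, mul_ite, mul_one, mul_zero]
  rw [Finset.sum_add_distrib, Finset.sum_ite_eq (Finset.range (g-1)) n (fun i => (A i : ℚ))]
  by_cases h1 : n < g
  · by_cases h2 : n < g - 1
    · have h3 : ¬ n = g - 1 := by omega
      rw [Finset.sum_eq_zero (fun i hi => by
        rw [if_neg]; intro hc; rw [Finset.mem_range] at hi; omega)]
      rw [if_pos h1]
      simp [Finset.mem_range, h2, h3]
    · have h3 : n = g - 1 := by omega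
      rw [Finset.sum_eq_zero (fun i hi => by
        rw [if_neg]; intro hc; rw [Finset.mem_range] at hi; omega)]
      rw [if_pos h1, if_pos h3]
      subst h3
      simp [Finset.mem_range]
  · have hn1 : ¬ n ∈ Finset.range (g - 1) := by simp [Finset.mem_range]; omega
    have hn2 : ¬ n = g - 1 := by omega
    rw [if_neg hn1, if_neg hn2, if_neg h1]
    by_cases h2 : n ≤ 2 * g - 2
    · rw [Finset.sum_eq_single_of_mem (2 * g - 2 - n)
        (by rw [Finset.mem_range]; omega)
        (fun i hi hne => by rw [if_neg]; intro hc; rw [Finset.mem_range] at hi; omega)]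
      have h4 : n = 2 * g - 2 - (2 * g - 2 - n) := by omega
      have h5 : g - 1 - (2 * g - 2 - n) = n + 1 - g := by omega
      rw [if_pos h2, if_pos h4, h5]
      ring
    · rw [Finset.sum_eq_zero (fun i hi => by
        rw [if_neg]; intro hc; rw [Finset.mem_range] at hi; omega)]
      simp [h2]

private theorem hwrp_keyC (q g : ℕ) (hq : 2 ≤ q) (hg : 1 ≤ g) (h : ℤ)
    (E : ℕ → ℚ)
    (hE : E = fun n => if n < g then 0
      else (h : ℚ) * (((q : ℚ) ^ (n + 1 - g) - 1) / ((q : ℚ) - 1))) :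
    ((1 - PowerSeries.X) * (1 - PowerSeries.C (q : ℚ) * PowerSeries.X)) * PowerSeries.mk E
      = PowerSeries.C (h : ℚ) * PowerSeries.X ^ g := by
  have hq1 : (q : ℚ) - 1 ≠ 0 := by
    have : (2 : ℚ) ≤ (q : ℚ) := by exact_mod_cast hq
    intro hc; nlinarith
  have hElt : ∀ m, m < g → E m = 0 := fun m hm => by rw [hE]; exact if_pos hm
  have hEge : ∀ m, g ≤ m → E m = (h : ℚ) * (((q : ℚ) ^ (m + 1 - g) - 1) / ((q : ℚ) - 1)) :=
    fun m hm => by rw [hE]; exact if_neg (by omega)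
  have expand : ((1 - PowerSeries.X) * (1 - PowerSeries.C (q : ℚ) * PowerSeries.X)) * PowerSeries.mk E
      = PowerSeries.mk E - PowerSeries.C (q : ℚ) * (PowerSeries.mk E * PowerSeries.X ^ 1)
        - PowerSeries.mk E * PowerSeries.X ^ 1
        + PowerSeries.C (q : ℚ) * (PowerSeries.mk E * PowerSeries.X ^ 2) := by ring
  rw [expand]
  ext n
  simp only [map_sub, map_add, PowerSeries.coeff_C_mul, PowerSeries.coeff_mul_X_pow',
    PowerSeries.coeff_mk, PowerSeries.coeff_X_pow, PowerSeries.coeff_C, mul_ite, mul_zero, mul_one]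
  by_cases h0 : n < g
  · rw [hElt n h0, hElt (n-1) (by omega), hElt (n-2) (by omega)]
    simp [show ¬ g ≤ n from by omega]
  · by_cases h1 : n = g
    · have e1 : E n = (h : ℚ) := by
        rw [hEge n (by omega), show n + 1 - g = 1 from by omega, pow_one, div_self hq1, mul_one]
      rw [e1, hElt (n-1) (by omega), hElt (n-2) (by omega)]
      simp [show g ≤ n from by omega, show n - g = 0 from by omega]
    · have hgn : g + 1 ≤ n := by omega
      have hn1 : 1 ≤ n := by omega
      rw [hEge n (by omega), hEge (n-1) (by omega)]
      by_cases h2 : n = g + 1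
      · subst h2
        rw [hElt (g+1-2) (by omega),
          show g + 1 + 1 - g = 2 from by omega, show g + 1 - 1 + 1 - g = 1 from by omega]
        rw [if_pos hn1, if_pos hn1]
        rw [if_pos (show g ≤ g + 1 by omega), if_neg (show ¬ g+1-g = 0 by omega)]
        by_cases h3 : 2 ≤ g + 1
        · rw [if_pos h3]; field_simp; ring
        · rw [if_neg h3]; field_simp; ring
      · have hgn2 : g + 2 ≤ n := by omega
        obtain ⟨j, hj⟩ : ∃ j, n + 1 - g = j + 2 := ⟨n - g - 1, by omega⟩
        rw [hEge (n-2) (by omega), hj,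
          show n - 1 + 1 - g = j + 1 from by omega, show n - 2 + 1 - g = j from by omega,
          if_pos hn1, if_pos hn1, if_pos (show 2 ≤ n by omega),
          if_pos (show g ≤ n by omega), if_neg (show ¬ n - g = 0 by omega)]
        field_simp
        ring

/-- Let `q ≥ 2` and `g ≥ 1` be integers, `h` an integer, and `(A_j)` a sequence of
integers satisfying the Riemann–Roch type relations
`A_j = q^{j−g+1} A_{2g−2−j} + h·(q^{j−g+1}−1)/(q−1)` for `g ≤ j ≤ 2g−2` and
`A_j = h·(q^{j−g+1}−1)/(q−1)` for `j ≥ 2g−1`.  If `L ∈ ℚ[t]` satisfies the power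
series identity `L(t)/((1−t)(1−qt)) = Σ_j A_j t^j`, then
`L(t) = (1−t)(1−qt)·D(t) + h·t^g`, where
`D(t) = Σ_{i=0}^{g−2} A_i·(t^i + q^{g−1−i} t^{2g−2−i}) + A_{g−1}·t^{g−1}`;
in particular `D` has integer coefficients and is determined by `A_0, …, A_{g−1}`. -/
theorem hasse_weil_reduced_polynomial (q g : ℕ) (hq : 2 ≤ q) (hg : 1 ≤ g)
    (h : ℤ) (A : ℕ → ℤ)
    (hRR1 : ∀ j, g ≤ j → j ≤ 2 * g - 2 →
      (A j : ℚ) = (q : ℚ) ^ (j + 1 - g) * (A (2 * g - 2 - j) : ℚ) +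
        (h : ℚ) * (((q : ℚ) ^ (j + 1 - g) - 1) / ((q : ℚ) - 1)))
    (hRR2 : ∀ j, 2 * g - 1 ≤ j →
      (A j : ℚ) = (h : ℚ) * (((q : ℚ) ^ (j + 1 - g) - 1) / ((q : ℚ) - 1)))
    (L : ℚ[X])
    (hZ : (L : PowerSeries ℚ) =
      ((1 - PowerSeries.X) * (1 - PowerSeries.C (q : ℚ) * PowerSeries.X)) *
        PowerSeries.mk fun j => (A j : ℚ)) :
    L = (1 - Polynomial.X) * (1 - Polynomial.C (q : ℚ) * Polynomial.X) *
        ((∑ i ∈ Finset.range (g - 1), Polynomial.C (A i : ℚ) *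
          (Polynomial.X ^ i +
            Polynomial.C ((q : ℚ) ^ (g - 1 - i)) * Polynomial.X ^ (2 * g - 2 - i))) +
          Polynomial.C (A (g - 1) : ℚ) * Polynomial.X ^ (g - 1)) +
      Polynomial.C (h : ℚ) * Polynomial.X ^ g := by
  set E : ℕ → ℚ := fun n => if n < g then 0
    else (h : ℚ) * (((q : ℚ) ^ (n + 1 - g) - 1) / ((q : ℚ) - 1)) with hEdef
  set D : ℚ[X] := (∑ i ∈ Finset.range (g - 1), Polynomial.C (A i : ℚ) *
          (Polynomial.X ^ i +
            Polynomial.C ((q : ℚ) ^ (g - 1 - i)) * Polynomial.X ^ (2 * g - 2 - i))) +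
          Polynomial.C (A (g - 1) : ℚ) * Polynomial.X ^ (g - 1) with hDdef
  -- decomposition of the coefficient series
  have hB : PowerSeries.mk (fun j => (A j : ℚ))
      = ((D : ℚ[X]) : PowerSeries ℚ) + PowerSeries.mk E := by
    ext n
    rw [map_add, PowerSeries.coeff_mk, Polynomial.coeff_coe, PowerSeries.coeff_mk, hDdef,
      hwrp_Dcoeff q g hg A n]
    by_cases h0 : n < g
    · simp [hEdef, h0]
    · by_cases h1 : n ≤ 2 * g - 2
      · simp only [hEdef, if_neg h0, if_pos h1]
        exact hRR1 n (by omega) h1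
      · simp only [hEdef, if_neg h0, if_neg h1, zero_add]
        exact hRR2 n (by omega)
  rw [← Polynomial.coe_inj, hZ, hB, mul_add,
    hwrp_keyC q g hq hg h E hEdef]
  simp only [Polynomial.coe_add, Polynomial.coe_mul, Polynomial.coe_sub, Polynomial.coe_one,
    Polynomial.coe_X, Polynomial.coe_C, Polynomial.coe_pow]
end

section
/- Let q ≥ 2 and g ≥ 1 be integers and A_0, …, A_{g−1} integers with A_0 = 1 and A_j ≥ 0 for all j. Put D(t) := Σ_{j=0}^{g−1} A_j t^{j} + Σ_{j=g}^{2g−2} A_{2g−2−j}·q^{j−g+1}·t^{j}, and define (B_i)_{i ≥ 0} by the formal power series identity D(t)/((1−t)(1−qt)) = Σ_{i ≥ 0} B_i t^{i}. Then B_i ≥ 1 for every i ≥ 0, B_i = q^{i−g+2}·B_{2g−4−i} + D(1)·(q^{i−g+2} − 1)/(q − 1) for all g−1 ≤ i ≤ 2g−4, and B_i = D(1)·(q^{i−g+2} − 1)/(q − 1) for all i ≥ 2g−3. -/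
open Polynomial PowerSeries

/-- Duursma's reduced polynomial
`D(t) = Σ_{j=0}^{g−1} A_j t^j + Σ_{j=g}^{2g−2} A_{2g−2−j} q^{j−g+1} t^j` built from
the numbers `A_0, …, A_{g−1}` of effective divisors of small degree. -/
noncomputable def duursmaD (q g : ℕ) (A : ℕ → ℤ) : Polynomial ℚ :=
  (∑ j ∈ Finset.range g, Polynomial.C (A j : ℚ) * Polynomial.X ^ j) +
    ∑ j ∈ Finset.Icc g (2 * g - 2),
      Polynomial.C ((A (2 * g - 2 - j) : ℚ) * (q : ℚ) ^ (j + 1 - g)) * Polynomial.X ^ j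

namespace DuursmaAux

lemma pow_mul_pow {x : ℚ} {a b c : ℕ} (h : a + b = c) : x ^ a * x ^ b = x ^ c := by
  rw [← pow_add, h]

lemma coeff_eq (q g : ℕ) (A : ℕ → ℤ) (n : ℕ) :
    (duursmaD q g A).coeff n =
      (if n < g then (A n : ℚ) else 0) +
        (if n ∈ Finset.Icc g (2 * g - 2) then (A (2 * g - 2 - n) : ℚ) * (q : ℚ) ^ (n + 1 - g)
          else 0) := by
  rw [duursmaD, Polynomial.coeff_add, Polynomial.finset_sum_coeff, Polynomial.finset_sum_coeff]
  simp only [Polynomial.coeff_C_mul, Polynomial.coeff_X_pow, mul_ite, mul_one, mul_zero]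
  rw [Finset.sum_ite_eq, Finset.sum_ite_eq]
  simp [Finset.mem_range]

lemma coeff_lt (q g : ℕ) (A : ℕ → ℤ) {n : ℕ} (h : n < g) :
    (duursmaD q g A).coeff n = (A n : ℚ) := by
  rw [coeff_eq]
  have : n ∉ Finset.Icc g (2 * g - 2) := by simp [Finset.mem_Icc]; omega
  simp [h, this]

lemma coeff_ge (q g : ℕ) (A : ℕ → ℤ) {n : ℕ} (h1 : g ≤ n) (h2 : n ≤ 2 * g - 2) :
    (duursmaD q g A).coeff n = (A (2 * g - 2 - n) : ℚ) * (q : ℚ) ^ (n + 1 - g) := by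
  rw [coeff_eq]
  have h3 : ¬ n < g := by omega
  simp [h3, Finset.mem_Icc, h1, h2]

lemma coeff_zero_of_gt (q g : ℕ) (A : ℕ → ℤ) {n : ℕ} (hg : 1 ≤ g) (h : 2 * g - 2 < n) :
    (duursmaD q g A).coeff n = 0 := by
  rw [coeff_eq]
  have h3 : ¬ n < g := by omega
  have : n ∉ Finset.Icc g (2 * g - 2) := by simp [Finset.mem_Icc]; omega
  simp [h3, this]

lemma coeff_nonneg (q g : ℕ) (A : ℕ → ℤ) (hA : ∀ j, 0 ≤ A j) (n : ℕ) :
    0 ≤ (duursmaD q g A).coeff n := by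
  rw [coeff_eq]
  have h1 : (0:ℚ) ≤ A n := by exact_mod_cast hA n
  have h2 : (0:ℚ) ≤ A (2 * g - 2 - n) := by exact_mod_cast hA _
  apply add_nonneg <;> split <;> positivity

lemma sym (q g : ℕ) (A : ℕ → ℤ) (hg : 1 ≤ g) {k : ℕ} (hk : k ≤ 2 * g - 2) :
    (q : ℚ) ^ k * (duursmaD q g A).coeff (2 * g - 2 - k) =
      (q : ℚ) ^ (g - 1) * (duursmaD q g A).coeff k := by
  rcases lt_or_ge k g with h | h
  · rcases Nat.lt_or_ge (2 * g - 2 - k) g with h2 | h2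
    · have hk1 : k = g - 1 := by omega
      subst hk1
      rw [show 2 * g - 2 - (g - 1) = g - 1 from by omega]
    · rw [coeff_ge q g A h2 (by omega), coeff_lt q g A h]
      have e1 : 2 * g - 2 - (2 * g - 2 - k) = k := by omega
      have e2 : (2 * g - 2 - k) + 1 - g = g - 1 - k := by omega
      rw [e1, e2, show (q:ℚ) ^ k * ((A k : ℚ) * (q:ℚ) ^ (g - 1 - k)) =
        (A k : ℚ) * ((q:ℚ) ^ k * (q:ℚ) ^ (g - 1 - k)) from by ring,
        pow_mul_pow (show k + (g - 1 - k) = g - 1 by omega)]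
      ring
  · rw [coeff_ge q g A h hk, coeff_lt q g A (show 2 * g - 2 - k < g by omega)]
    rw [show (q:ℚ) ^ (g - 1) * ((A (2 * g - 2 - k) : ℚ) * (q:ℚ) ^ (k + 1 - g)) =
      (A (2 * g - 2 - k) : ℚ) * ((q:ℚ) ^ (g - 1) * (q:ℚ) ^ (k + 1 - g)) from by ring,
      pow_mul_pow (show (g - 1) + (k + 1 - g) = k by omega)]
    ring

lemma keyL (q g : ℕ) (A : ℕ → ℤ) (hg : 1 ≤ g) (hq : 2 ≤ q) {i m : ℕ}
    (hm : m ≤ 2 * g - 2) (him : m ≤ i + 1) (hgi : g ≤ i + 2) :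
    (q : ℚ) ^ (i + 2 - g) * ∑ k ∈ Finset.range (m + 1), (duursmaD q g A).coeff (2 * g - 2 - k) =
      ∑ k ∈ Finset.range (m + 1), (q : ℚ) ^ (i + 1 - k) * (duursmaD q g A).coeff k := by
  rw [Finset.mul_sum]
  apply Finset.sum_congr rfl
  intro k hk
  rw [Finset.mem_range] at hk
  have hq0 : (q : ℚ) ^ k ≠ 0 := by positivity
  apply mul_right_cancel₀ hq0
  calc (q:ℚ) ^ (i + 2 - g) * (duursmaD q g A).coeff (2 * g - 2 - k) * (q:ℚ) ^ k
      = (q:ℚ) ^ (i + 2 - g) * ((q:ℚ) ^ k * (duursmaD q g A).coeff (2 * g - 2 - k)) := by ring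
    _ = (q:ℚ) ^ (i + 2 - g) * ((q:ℚ) ^ (g - 1) * (duursmaD q g A).coeff k) := by
        rw [sym q g A hg (by omega)]
    _ = ((q:ℚ) ^ (i + 2 - g) * (q:ℚ) ^ (g - 1)) * (duursmaD q g A).coeff k := by ring
    _ = (q:ℚ) ^ (i + 1) * (duursmaD q g A).coeff k := by
        rw [pow_mul_pow (show (i + 2 - g) + (g - 1) = i + 1 by omega)]
    _ = ((q:ℚ) ^ (i + 1 - k) * (q:ℚ) ^ k) * (duursmaD q g A).coeff k := by
        rw [pow_mul_pow (show (i + 1 - k) + k = i + 1 by omega)]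
    _ = (q:ℚ) ^ (i + 1 - k) * (duursmaD q g A).coeff k * (q:ℚ) ^ k := by ring

lemma eval_one_eq (q g : ℕ) (A : ℕ → ℤ) (hg : 1 ≤ g) :
    (duursmaD q g A).eval 1 = ∑ j ∈ Finset.range (2 * g - 1), (duursmaD q g A).coeff j := by
  have h1 : (duursmaD q g A).eval 1 =
      (∑ j ∈ Finset.range g, (A j : ℚ)) +
        ∑ j ∈ Finset.Icc g (2 * g - 2), (A (2 * g - 2 - j) : ℚ) * (q : ℚ) ^ (j + 1 - g) := by
    simp [duursmaD, Polynomial.eval_finset_sum]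
  rw [h1]
  have h2 : Finset.range (2 * g - 1) = Finset.range g ∪ Finset.Icc g (2 * g - 2) := by
    ext j
    simp [Finset.mem_range, Finset.mem_Icc]
    omega
  rw [h2, Finset.sum_union]
  · congr 1
    · exact Finset.sum_congr rfl fun j hj => (coeff_lt q g A (Finset.mem_range.mp hj)).symm
    · refine Finset.sum_congr rfl fun j hj => ?_
      rw [Finset.mem_Icc] at hj
      exact (coeff_ge q g A hj.1 hj.2).symm
  · rw [Finset.disjoint_left]
    intro j hj hj'
    rw [Finset.mem_range] at hj
    rw [Finset.mem_Icc] at hj'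
    omega

end DuursmaAux

namespace DuursmaAux

lemma geo (r : ℚ) :
    ((1 : ℚ⟦X⟧) - PowerSeries.C r * PowerSeries.X) * PowerSeries.mk (fun n => r ^ n) = 1 := by
  ext n
  cases n with
  | zero => simp
  | succ n =>
    rw [sub_mul, one_mul, map_sub, mul_assoc, PowerSeries.coeff_C_mul,
      PowerSeries.coeff_succ_X_mul, PowerSeries.coeff_mk, PowerSeries.coeff_mk,
      PowerSeries.coeff_one]
    simp [pow_succ, mul_comm]

lemma B_eq (q g : ℕ) (A : ℕ → ℤ) (B : ℕ → ℚ)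
    (hB : ((duursmaD q g A : Polynomial ℚ) : PowerSeries ℚ) =
      ((1 - PowerSeries.X) * (1 - PowerSeries.C (q : ℚ) * PowerSeries.X)) *
        PowerSeries.mk B) (i : ℕ) :
    B i = ∑ j ∈ Finset.range (i + 1),
      (duursmaD q g A).coeff j * ∑ m ∈ Finset.range (i - j + 1), (q : ℚ) ^ m := by
  have h1 : ((1 : ℚ⟦X⟧) - PowerSeries.X) * PowerSeries.mk (fun n => (1 : ℚ) ^ n) = 1 := by
    simpa using geo 1
  have h2 := geo (q : ℚ)
  set V : ℚ⟦X⟧ := PowerSeries.mk (fun n => (1 : ℚ) ^ n) * PowerSeries.mk (fun n => (q : ℚ) ^ n)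
    with hV
  have hU : (((1 : ℚ⟦X⟧) - PowerSeries.X) *
      (1 - PowerSeries.C (q : ℚ) * PowerSeries.X)) * V = 1 := by
    calc (((1 : ℚ⟦X⟧) - PowerSeries.X) * (1 - PowerSeries.C (q : ℚ) * PowerSeries.X)) * V
        = (((1 : ℚ⟦X⟧) - PowerSeries.X) * PowerSeries.mk (fun n => (1 : ℚ) ^ n)) *
          (((1 : ℚ⟦X⟧) - PowerSeries.C (q : ℚ) * PowerSeries.X) *
            PowerSeries.mk (fun n => (q : ℚ) ^ n)) := by rw [hV]; ring
      _ = 1 := by rw [h1, h2, one_mul]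
  have hmkB : PowerSeries.mk B = ((duursmaD q g A : Polynomial ℚ) : PowerSeries ℚ) * V := by
    calc PowerSeries.mk B = 1 * PowerSeries.mk B := (one_mul _).symm
      _ = ((((1 : ℚ⟦X⟧) - PowerSeries.X) *
            (1 - PowerSeries.C (q : ℚ) * PowerSeries.X)) * V) * PowerSeries.mk B := by rw [hU]
      _ = ((((1 : ℚ⟦X⟧) - PowerSeries.X) *
            (1 - PowerSeries.C (q : ℚ) * PowerSeries.X)) * PowerSeries.mk B) * V := by ring
      _ = ((duursmaD q g A : Polynomial ℚ) : PowerSeries ℚ) * V := by rw [← hB]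
  have hVc : V = PowerSeries.mk (fun k => ∑ m ∈ Finset.range (k + 1), (q : ℚ) ^ m) := by
    ext k
    rw [hV, PowerSeries.coeff_mul, PowerSeries.coeff_mk]
    simp only [PowerSeries.coeff_mk, one_pow, one_mul]
    rw [Finset.Nat.sum_antidiagonal_eq_sum_range_succ (fun a b => (q : ℚ) ^ b)]
    rw [← Finset.sum_range_reflect (fun m => (q : ℚ) ^ m) (k + 1)]
    simp
  calc B i = PowerSeries.coeff i (PowerSeries.mk B) := (PowerSeries.coeff_mk i B).symm
    _ = PowerSeries.coeff i (((duursmaD q g A : Polynomial ℚ) : PowerSeries ℚ) *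
        PowerSeries.mk (fun k => ∑ m ∈ Finset.range (k + 1), (q : ℚ) ^ m)) := by
        rw [hmkB, hVc]
    _ = ∑ p ∈ Finset.HasAntidiagonal.antidiagonal i,
        (duursmaD q g A).coeff p.1 * ∑ m ∈ Finset.range (p.2 + 1), (q : ℚ) ^ m := by
        rw [PowerSeries.coeff_mul]
        refine Finset.sum_congr rfl fun p _ => ?_
        rw [Polynomial.coeff_coe, PowerSeries.coeff_mk]
    _ = _ := Finset.Nat.sum_antidiagonal_eq_sum_range_succ
        (fun a b => (duursmaD q g A).coeff a * ∑ m ∈ Finset.range (b + 1), (q : ℚ) ^ m) i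

end DuursmaAux

open DuursmaAux in
/-- Let `q ≥ 2`, `g ≥ 1`, `A_0, …, A_{g−1}` integers with `A_0 = 1` and all `A_j ≥ 0`,
`D` the associated Duursma reduced polynomial and `(B_i)` defined by
`D(t)/((1−t)(1−qt)) = Σ_i B_i t^i`.  Then `B_i ≥ 1` for all `i`,
`B_i = q^{i−g+2} B_{2g−4−i} + D(1)(q^{i−g+2}−1)/(q−1)` for `g−1 ≤ i ≤ 2g−4`, and
`B_i = D(1)(q^{i−g+2}−1)/(q−1)` for `i ≥ 2g−3`. -/
theorem virtual_riemann_roch_relations (q g : ℕ) (hq : 2 ≤ q) (hg : 1 ≤ g)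
    (A : ℕ → ℤ) (hA0 : A 0 = 1) (hA : ∀ j, 0 ≤ A j) (B : ℕ → ℚ)
    (hB : ((duursmaD q g A : Polynomial ℚ) : PowerSeries ℚ) =
      ((1 - PowerSeries.X) * (1 - PowerSeries.C (q : ℚ) * PowerSeries.X)) *
        PowerSeries.mk B) :
    (∀ i, 1 ≤ B i) ∧
    (∀ i, g ≤ i + 1 → i + 4 ≤ 2 * g →
      B i = (q : ℚ) ^ (i + 2 - g) * B (2 * g - 4 - i) +
        (duursmaD q g A).eval 1 * (((q : ℚ) ^ (i + 2 - g) - 1) / ((q : ℚ) - 1))) ∧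
    (∀ i, 2 * g ≤ i + 3 →
      B i = (duursmaD q g A).eval 1 * (((q : ℚ) ^ (i + 2 - g) - 1) / ((q : ℚ) - 1))) := by
  have hq1 : (1 : ℚ) < (q : ℚ) := by exact_mod_cast hq
  have hqne : ((q : ℚ) - 1) ≠ 0 := by linarith
  have hdnn : ∀ j, 0 ≤ (duursmaD q g A).coeff j := coeff_nonneg q g A hA
  have hd0 : (duursmaD q g A).coeff 0 = 1 := by
    rw [coeff_lt q g A (by omega : 0 < g), hA0]; norm_num
  have hQB : ∀ i, ((q : ℚ) - 1) * B i =
      ∑ j ∈ Finset.range (i + 1), (duursmaD q g A).coeff j * ((q : ℚ) ^ (i + 1 - j) - 1) := by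
    intro i
    rw [B_eq q g A B hB i, Finset.mul_sum]
    refine Finset.sum_congr rfl fun j hj => ?_
    rw [Finset.mem_range] at hj
    have hgeom : (∑ m ∈ Finset.range (i - j + 1), (q : ℚ) ^ m) * ((q : ℚ) - 1) =
        (q : ℚ) ^ (i - j + 1) - 1 := geom_sum_mul (q : ℚ) (i - j + 1)
    have hij : i - j + 1 = i + 1 - j := by omega
    calc ((q : ℚ) - 1) * ((duursmaD q g A).coeff j * ∑ m ∈ Finset.range (i - j + 1), (q : ℚ) ^ m)
        = (duursmaD q g A).coeff j * ((∑ m ∈ Finset.range (i - j + 1), (q : ℚ) ^ m) * ((q : ℚ) - 1)) := by ring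
      _ = (duursmaD q g A).coeff j * ((q : ℚ) ^ (i - j + 1) - 1) := by rw [hgeom]
      _ = (duursmaD q g A).coeff j * ((q : ℚ) ^ (i + 1 - j) - 1) := by rw [hij]
  have hreflS : ∑ k ∈ Finset.range (2 * g - 1), (duursmaD q g A).coeff (2 * g - 2 - k) =
      ∑ k ∈ Finset.range (2 * g - 1), (duursmaD q g A).coeff k := by
    have h := Finset.sum_range_reflect (fun k => (duursmaD q g A).coeff k) (2 * g - 1)
    refine Eq.trans ?_ h
    refine Finset.sum_congr rfl fun k hk => ?_
    rw [Finset.mem_range] at hk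
    congr 1 <;> omega
  refine ⟨?_, ?_, ?_⟩
  · -- B i ≥ 1
    intro i
    rw [B_eq q g A B hB i]
    have h0 : (1 : ℚ) ≤ (duursmaD q g A).coeff 0 * ∑ m ∈ Finset.range (i - 0 + 1), (q : ℚ) ^ m := by
      rw [hd0, one_mul]
      have h1 : ((q : ℚ) ^ 0) ≤ ∑ m ∈ Finset.range (i - 0 + 1), (q : ℚ) ^ m :=
        Finset.single_le_sum (f := fun m => (q : ℚ) ^ m) (fun m _ => by positivity)
          (Finset.mem_range.mpr (Nat.succ_pos _))
      simpa using h1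
    refine le_trans h0 ?_
    exact Finset.single_le_sum
      (f := fun j => (duursmaD q g A).coeff j * ∑ m ∈ Finset.range (i - j + 1), (q : ℚ) ^ m)
      (fun j _ => mul_nonneg (hdnn j) (Finset.sum_nonneg fun m _ => by positivity))
      (Finset.mem_range.mpr (Nat.succ_pos _))
  · -- middle relation
    intro i hi1 hi2
    have hI1 : (q : ℚ) ^ (i + 2 - g) * ∑ k ∈ Finset.range (i + 2), (duursmaD q g A).coeff (2 * g - 2 - k) =
        ∑ k ∈ Finset.range (i + 2), (q : ℚ) ^ (i + 1 - k) * (duursmaD q g A).coeff k := by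
      have h := keyL q g A hg hq (m := i + 1) (i := i) (by omega) (by omega) (by omega)
      rw [show i + 1 + 1 = i + 2 by omega] at h
      exact h
    have hA1 : ((q : ℚ) - 1) * B i =
        (∑ k ∈ Finset.range (i + 2), (q : ℚ) ^ (i + 1 - k) * (duursmaD q g A).coeff k) -
          ∑ j ∈ Finset.range (i + 2), (duursmaD q g A).coeff j := by
      rw [hQB i]
      have h1 : ∑ j ∈ Finset.range (i + 1), (duursmaD q g A).coeff j * ((q : ℚ) ^ (i + 1 - j) - 1) =
          ∑ j ∈ Finset.range (i + 1), ((q : ℚ) ^ (i + 1 - j) * (duursmaD q g A).coeff j - (duursmaD q g A).coeff j) :=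
        Finset.sum_congr rfl fun j _ => by ring
      rw [h1, Finset.sum_sub_distrib]
      have h2 : ∑ k ∈ Finset.range (i + 2), (q : ℚ) ^ (i + 1 - k) * (duursmaD q g A).coeff k =
          (∑ j ∈ Finset.range (i + 1), (q : ℚ) ^ (i + 1 - j) * (duursmaD q g A).coeff j) +
            (q : ℚ) ^ (i + 1 - (i + 1)) * (duursmaD q g A).coeff (i + 1) := Finset.sum_range_succ _ (i + 1)
      have h3 : ∑ j ∈ Finset.range (i + 2), (duursmaD q g A).coeff j =
          (∑ j ∈ Finset.range (i + 1), (duursmaD q g A).coeff j) + (duursmaD q g A).coeff (i + 1) := Finset.sum_range_succ _ (i + 1)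
      rw [Nat.sub_self, pow_zero, one_mul] at h2
      linarith [h2, h3]
    have hA2 : (q : ℚ) ^ (i + 2 - g) * (((q : ℚ) - 1) * B (2 * g - 4 - i)) =
        (∑ j ∈ Finset.range (2 * g - 4 - i + 1), (duursmaD q g A).coeff (2 * g - 2 - j)) -
          (q : ℚ) ^ (i + 2 - g) * ∑ j ∈ Finset.range (2 * g - 4 - i + 1), (duursmaD q g A).coeff j := by
      rw [hQB (2 * g - 4 - i), Finset.mul_sum]
      have h1 : ∀ j ∈ Finset.range (2 * g - 4 - i + 1),
          (q : ℚ) ^ (i + 2 - g) * ((duursmaD q g A).coeff j * ((q : ℚ) ^ (2 * g - 4 - i + 1 - j) - 1)) =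
            (duursmaD q g A).coeff j * (q : ℚ) ^ (g - 1 - j) - (q : ℚ) ^ (i + 2 - g) * (duursmaD q g A).coeff j := by
        intro j hj
        rw [Finset.mem_range] at hj
        have hpow : (q : ℚ) ^ (i + 2 - g) * (q : ℚ) ^ (2 * g - 4 - i + 1 - j) =
            (q : ℚ) ^ (g - 1 - j) :=
          pow_mul_pow (show (i + 2 - g) + (2 * g - 4 - i + 1 - j) = g - 1 - j by omega)
        calc (q : ℚ) ^ (i + 2 - g) * ((duursmaD q g A).coeff j * ((q : ℚ) ^ (2 * g - 4 - i + 1 - j) - 1))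
            = (duursmaD q g A).coeff j * ((q : ℚ) ^ (i + 2 - g) * (q : ℚ) ^ (2 * g - 4 - i + 1 - j)) -
                (q : ℚ) ^ (i + 2 - g) * (duursmaD q g A).coeff j := by ring
          _ = (duursmaD q g A).coeff j * (q : ℚ) ^ (g - 1 - j) - (q : ℚ) ^ (i + 2 - g) * (duursmaD q g A).coeff j := by rw [hpow]
      rw [Finset.sum_congr rfl h1, Finset.sum_sub_distrib]
      have hI2 : ∑ j ∈ Finset.range (2 * g - 4 - i + 1), (duursmaD q g A).coeff j * (q : ℚ) ^ (g - 1 - j) =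
          ∑ j ∈ Finset.range (2 * g - 4 - i + 1), (duursmaD q g A).coeff (2 * g - 2 - j) := by
        refine Finset.sum_congr rfl fun j hj => ?_
        rw [Finset.mem_range] at hj
        have hqk : ((q : ℚ) ^ j) ≠ 0 := by positivity
        apply mul_right_cancel₀ hqk
        calc (duursmaD q g A).coeff j * (q : ℚ) ^ (g - 1 - j) * (q : ℚ) ^ j
            = ((q : ℚ) ^ (g - 1 - j) * (q : ℚ) ^ j) * (duursmaD q g A).coeff j := by ring
          _ = (q : ℚ) ^ (g - 1) * (duursmaD q g A).coeff j := by
              rw [pow_mul_pow (show (g - 1 - j) + j = g - 1 by omega)]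
          _ = (q : ℚ) ^ j * (duursmaD q g A).coeff (2 * g - 2 - j) := (sym q g A hg (by omega)).symm
          _ = (duursmaD q g A).coeff (2 * g - 2 - j) * (q : ℚ) ^ j := by ring
      rw [hI2, ← Finset.mul_sum]
    have hI3 : ∑ j ∈ Finset.range (2 * g - 1), (duursmaD q g A).coeff j =
        (∑ k ∈ Finset.range (i + 2), (duursmaD q g A).coeff (2 * g - 2 - k)) +
          ∑ j ∈ Finset.range (2 * g - 4 - i + 1), (duursmaD q g A).coeff j := by
      rw [← hreflS, ← Finset.sum_range_add_sum_Ico (fun k => (duursmaD q g A).coeff (2 * g - 2 - k))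
        (show i + 2 ≤ 2 * g - 1 by omega)]
      congr 1
      rw [Finset.sum_Ico_reflect (fun k => (duursmaD q g A).coeff k) (i + 2)
        (show 2 * g - 1 ≤ 2 * g - 2 + 1 by omega)]
      rw [show 2 * g - 2 + 1 - (2 * g - 1) = 0 from by omega,
        show 2 * g - 2 + 1 - (i + 2) = 2 * g - 4 - i + 1 from by omega, Nat.Ico_zero_eq_range]
    have hI3' : ∑ j ∈ Finset.range (2 * g - 1), (duursmaD q g A).coeff j =
        (∑ j ∈ Finset.range (i + 2), (duursmaD q g A).coeff j) +
          ∑ j ∈ Finset.range (2 * g - 4 - i + 1), (duursmaD q g A).coeff (2 * g - 2 - j) := by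
      rw [← Finset.sum_range_add_sum_Ico (fun k => (duursmaD q g A).coeff k)
        (show i + 2 ≤ 2 * g - 1 by omega)]
      congr 1
      have h1 : ∑ j ∈ Finset.Ico (i + 2) (2 * g - 1), (duursmaD q g A).coeff j =
          ∑ j ∈ Finset.Ico (i + 2) (2 * g - 1), (fun t => (duursmaD q g A).coeff (2 * g - 2 - t)) (2 * g - 2 - j) := by
        refine Finset.sum_congr rfl fun j hj => ?_
        rw [Finset.mem_Ico] at hj
        simp only
        congr 1 <;> omega
      rw [h1, Finset.sum_Ico_reflect (fun t => (duursmaD q g A).coeff (2 * g - 2 - t)) (i + 2)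
        (show 2 * g - 1 ≤ 2 * g - 2 + 1 by omega)]
      rw [show 2 * g - 2 + 1 - (2 * g - 1) = 0 from by omega,
        show 2 * g - 2 + 1 - (i + 2) = 2 * g - 4 - i + 1 from by omega, Nat.Ico_zero_eq_range]
    have key2 : ((q : ℚ) - 1) * B i =
        ((q : ℚ) - 1) * ((q : ℚ) ^ (i + 2 - g) * B (2 * g - 4 - i)) +
          (∑ j ∈ Finset.range (2 * g - 1), (duursmaD q g A).coeff j) * ((q : ℚ) ^ (i + 2 - g) - 1) := by
      linear_combination hA1 - hA2 - hI1 - (q : ℚ) ^ (i + 2 - g) * hI3 + hI3'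
    rw [eval_one_eq q g A hg]
    apply mul_left_cancel₀ hqne
    have hdiv : ((q : ℚ) - 1) * ((∑ j ∈ Finset.range (2 * g - 1), (duursmaD q g A).coeff j) *
        (((q : ℚ) ^ (i + 2 - g) - 1) / ((q : ℚ) - 1))) =
          (∑ j ∈ Finset.range (2 * g - 1), (duursmaD q g A).coeff j) * ((q : ℚ) ^ (i + 2 - g) - 1) := by
      field_simp
    rw [mul_add, hdiv]
    linear_combination key2
  · -- tail relation
    intro i hi
    have hE : ∑ j ∈ Finset.range (i + 1), (duursmaD q g A).coeff j * ((q : ℚ) ^ (i + 1 - j) - 1) =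
        ∑ j ∈ Finset.range (2 * g - 1), (duursmaD q g A).coeff j * ((q : ℚ) ^ (i + 1 - j) - 1) := by
      have e1 : ∑ j ∈ Finset.range (i + 1), (duursmaD q g A).coeff j * ((q : ℚ) ^ (i + 1 - j) - 1) =
          ∑ j ∈ Finset.range (max (i + 1) (2 * g - 1)), (duursmaD q g A).coeff j * ((q : ℚ) ^ (i + 1 - j) - 1) := by
        apply Finset.sum_subset (Finset.range_subset_range.mpr (le_max_left _ _))
        intro j hj hj'
        rw [Finset.mem_range, not_lt] at hj'
        rw [show i + 1 - j = 0 from by omega, pow_zero, sub_self, mul_zero]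
      have e2 : ∑ j ∈ Finset.range (2 * g - 1), (duursmaD q g A).coeff j * ((q : ℚ) ^ (i + 1 - j) - 1) =
          ∑ j ∈ Finset.range (max (i + 1) (2 * g - 1)), (duursmaD q g A).coeff j * ((q : ℚ) ^ (i + 1 - j) - 1) := by
        apply Finset.sum_subset (Finset.range_subset_range.mpr (le_max_right _ _))
        intro j hj hj'
        rw [Finset.mem_range, not_lt] at hj'
        rw [coeff_zero_of_gt q g A hg (by omega), zero_mul]
      rw [e1, ← e2]
    have hkey : ((q : ℚ) - 1) * B i =
        (∑ j ∈ Finset.range (2 * g - 1), (duursmaD q g A).coeff j) * ((q : ℚ) ^ (i + 2 - g) - 1) := by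
      rw [hQB i, hE]
      have h1 : ∑ j ∈ Finset.range (2 * g - 1), (duursmaD q g A).coeff j * ((q : ℚ) ^ (i + 1 - j) - 1) =
          ∑ j ∈ Finset.range (2 * g - 1), ((q : ℚ) ^ (i + 1 - j) * (duursmaD q g A).coeff j - (duursmaD q g A).coeff j) :=
        Finset.sum_congr rfl fun j _ => by ring
      rw [h1, Finset.sum_sub_distrib]
      have hL := keyL q g A hg hq (m := 2 * g - 2) (i := i) (le_refl (2 * g - 2))
        (show 2 * g - 2 ≤ i + 1 by omega) (show g ≤ i + 2 by omega)
      rw [show 2 * g - 2 + 1 = 2 * g - 1 from by omega] at hL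
      rw [hreflS] at hL
      rw [← hL]
      ring
    rw [eval_one_eq q g A hg]
    apply mul_left_cancel₀ hqne
    have hdiv : ((q : ℚ) - 1) * ((∑ j ∈ Finset.range (2 * g - 1), (duursmaD q g A).coeff j) *
        (((q : ℚ) ^ (i + 2 - g) - 1) / ((q : ℚ) - 1))) =
          (∑ j ∈ Finset.range (2 * g - 1), (duursmaD q g A).coeff j) * ((q : ℚ) ^ (i + 2 - g) - 1) := by
      field_simp
    rw [hdiv]
    linear_combination hkey
end
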